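/- arXiv:2107.09162 — 6 statements merged into one kernel-verified Lean document; each statement's English description precedes it below -/
import Mathlib

section
/- For a path graph P_n on n ≥ 1 vertices, the Laplacian energy satisfies LE(P_n) ≤ 2 + 4n/π, where LE(P_n) = Σ_{i=1}^n |μ_i − 2(n−1)/n| and the Laplacian eigenvalues of P_n are μ_j = 2 − 2cos(πj/n) = 4 sin²(πj/(2n)) for j = 0, 1, …, n−1. -/
set_option maxHeartbeats 1000000

open Real Finset


private lemma key_aux (N s : ℝ) (hN2 : 2 ≤ N)
    (hs0 : 0 < s) (hx1 : Real.pi / (2 * N) ≤ 1)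
    (hsin : Real.pi / (2 * N) - (Real.pi / (2 * N)) ^ 3 / 4 < s) :
    2 / s ≤ 4 * N / Real.pi + 4 / N := by
  have hπ : (0:ℝ) < π := Real.pi_pos
  have hN0 : (0:ℝ) < N := by linarith
  set x : ℝ := π / (2 * N) with hxdef
  have hxpos : 0 < x := by rw [hxdef]; positivity
  clear_value x
  have hNx : N * x = π / 2 := by rw [hxdef]; field_simp
  have h5 : N * x ^ 3 = π / 2 * x ^ 2 := by
    rw [show N * x ^ 3 = (N * x) * x ^ 2 by ring, hNx]
  have hx2 : x ^ 2 ≤ 1 := by nlinarith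
  have h6 : x ^ 4 ≤ x ^ 2 := by nlinarith [sq_nonneg x, hx2]
  have hprod : 0 ≤ (2 * N + 4 * x) * (s - (x - x ^ 3 / 4)) := by
    apply mul_nonneg (by nlinarith) (by linarith)
  have key2 : 2 * (N * x) ≤ (2 * N + 4 * x) * s := by
    nlinarith [Real.pi_lt_d2, sq_nonneg x]
  rw [div_le_iff₀ hs0]
  have hπx : π = 2 * N * x := by rw [hxdef]; field_simp
  have hrw2 : (4 * N / π + 4 / N) * s = ((2 * N + 4 * x) * s) / (N * x) := by
    rw [hπx]
    have hx0 : x ≠ 0 := ne_of_gt hxpos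
    field_simp
    ring
  rw [hrw2, le_div_iff₀ (mul_pos hN0 hxpos)]
  linarith

/-- For the path `P_n` with Laplacian eigenvalues `μ_j = 4 sin²(πj/(2n))`, `j = 0,…,n-1`,
the Laplacian energy satisfies `LE(P_n) ≤ 2 + 4n/π`. -/
theorem path_laplacian_energy_le (n : ℕ) (hn : 1 ≤ n) :
    ∑ j ∈ Finset.range n,
        |4 * Real.sin (Real.pi * j / (2 * n)) ^ 2 - 2 * (n - 1) / n| ≤
      2 + 4 * n / Real.pi := by
  have hπ : (0:ℝ) < π := Real.pi_pos
  rcases eq_or_lt_of_le hn with h1 | h2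
  · subst h1
    simp only [Finset.sum_range_one, Nat.cast_zero, Nat.cast_one, mul_zero, zero_div,
      Real.sin_zero]
    rw [show |4 * (0:ℝ) ^ 2 - 2 * (1 - 1) / 1| = 0 by norm_num]
    positivity
  · -- n ≥ 2
    have hN0 : (0:ℝ) < n := by positivity
    have hN2 : (2:ℝ) ≤ n := by exact_mod_cast h2
    set N : ℝ := (n:ℝ) with hNdef
    clear_value N
    set s : ℝ := Real.sin (π / (2 * N)) with hsdef
    have hx1 : π / (2 * N) ≤ 1 := by
      rw [div_le_one (by linarith)]
      nlinarith [Real.pi_lt_d2]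
    have hxpos : 0 < π / (2 * N) := div_pos hπ (by linarith)
    have hs0 : 0 < s := Real.sin_pos_of_pos_of_lt_pi hxpos (div_lt_self hπ (by linarith))
    clear_value s
    set f : ℕ → ℝ := fun j => Real.sin ((2 * j + 1) * π / (2 * N)) with hfdef
    have hf0 : f 0 = s := by simp [hfdef, hsdef]
    have hstep : ∀ j : ℕ, f (j + 1) - f j = 2 * s * Real.cos (π * (j + 1) / N) := by
      intro j
      simp only [hfdef, hsdef]
      rw [Real.sin_sub_sin]
      push_cast
      congr 2
      · field_simp; ring
      · field_simp; ring
    have hfle : ∀ j : ℕ, f j ≤ 1 := fun j => Real.sin_le_one _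
    clear_value f
    set k : ℕ := n / 2 with hkdef
    clear_value k
    have hkn : k + (n - 1 - k) = n - 1 := by omega
    have hmid : f (n - 1) = s := by
      simp only [hfdef, hsdef]
      have : (2 * (((n : ℕ) - 1 : ℕ) : ℝ) + 1) * π / (2 * N) = π - π / (2 * N) := by
        rw [Nat.cast_sub hn, hNdef]
        push_cast
        field_simp
        ring
      rw [this, Real.sin_pi_sub]
    have hS1 : ∑ i ∈ Finset.range k, |Real.cos (π * (i + 1) / N)| = (f k - f 0) / (2 * s) := by
      rw [← Finset.sum_range_sub f, Finset.sum_div]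
      apply Finset.sum_congr rfl
      intro i hi
      rw [Finset.mem_range] at hi
      rw [hstep i, abs_of_nonneg]
      · field_simp
      · apply Real.cos_nonneg_of_mem_Icc
        constructor
        · have : (0:ℝ) ≤ π * (i + 1) / N := by positivity
          linarith
        · rw [div_le_div_iff₀ hN0 (by norm_num : (0:ℝ) < 2)]
          have h2i : ((i:ℝ) + 1) * 2 ≤ N := by
            have h : (i + 1) * 2 ≤ n := by omega
            rw [hNdef]
            exact_mod_cast h
          nlinarith
    have hS2 : ∑ i ∈ Finset.range (n - 1 - k), |Real.cos (π * ((k:ℝ) + i + 1) / N)|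
        = (f k - f (n - 1)) / (2 * s) := by
      have htel := Finset.sum_range_sub' (fun i => f (k + i)) (n - 1 - k)
      simp only [add_zero, hkn] at htel
      rw [← htel, Finset.sum_div]
      apply Finset.sum_congr rfl
      intro i hi
      rw [Finset.mem_range] at hi
      have heq : f (k + i) - f (k + (i + 1)) = -(2 * s * Real.cos (π * ((k:ℝ) + i + 1) / N)) := by
        rw [show k + (i + 1) = k + i + 1 by omega]
        have h := hstep (k + i)
        push_cast at h ⊢
        linarith
      rw [heq, abs_of_nonpos]
      · field_simp
      · apply Real.cos_nonpos_of_pi_div_two_le_of_le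
        · rw [div_le_div_iff₀ (by norm_num : (0:ℝ) < 2) hN0]
          have h2i : N ≤ ((k:ℝ) + i + 1) * 2 := by
            have h : n ≤ (k + i + 1) * 2 := by omega
            rw [hNdef]
            exact_mod_cast h
          nlinarith
        · have hle : (k:ℝ) + i + 1 ≤ N := by
            have h : k + i + 1 ≤ n := by omega
            rw [hNdef]
            exact_mod_cast h
          have : π * ((k:ℝ) + i + 1) / N ≤ π := by
            rw [div_le_iff₀ hN0]; nlinarith
          linarith
    have hcos_sum : ∑ i ∈ Finset.range (n - 1), |Real.cos (π * (i + 1) / N)| ≤ 1 / s - 1 := by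
      rw [← hkn, Finset.sum_range_add]
      have hcong : ∀ i ∈ Finset.range (n - 1 - k),
          |Real.cos (π * (((k + i : ℕ):ℝ) + 1) / N)| = |Real.cos (π * ((k:ℝ) + i + 1) / N)| := by
        intro i _
        push_cast
        ring_nf
      rw [Finset.sum_congr rfl hcong, hS1, hS2, hf0, hmid]
      have h1 : f k ≤ 1 := hfle k
      rw [← add_div, div_le_iff₀ (by positivity)]
      have h2 : (1/s - 1) * (2 * s) = 2 - 2*s := by field_simp
      rw [h2]
      linarith
    have hterm : ∀ i ∈ Finset.range (n - 1),
        |4 * Real.sin (π * ((i:ℝ) + 1) / (2 * N)) ^ 2 - 2 * (N - 1) / N|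
          ≤ 2 / N + 2 * |Real.cos (π * (i + 1) / N)| := by
      intro i _
      have hrw : 4 * Real.sin (π * ((i:ℝ) + 1) / (2 * N)) ^ 2
          = 2 - 2 * Real.cos (π * ((i:ℝ) + 1) / N) := by
        rw [Real.sin_sq_eq_half_sub]
        rw [show 2 * (π * ((i:ℝ) + 1) / (2 * N)) = π * ((i:ℝ)+1) / N by field_simp]
        ring
      rw [hrw]
      have hre : 2 - 2 * Real.cos (π * ((i:ℝ) + 1) / N) - 2 * (N - 1) / N
          = 2 / N - 2 * Real.cos (π * ((i:ℝ) + 1) / N) := by field_simp; ring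
      rw [hre]
      calc |2 / N - 2 * Real.cos (π * ((i:ℝ) + 1) / N)|
          ≤ |2 / N| + |2 * Real.cos (π * ((i:ℝ) + 1) / N)| := abs_sub _ _
        _ = 2 / N + 2 * |Real.cos (π * ((i:ℝ) + 1) / N)| := by
            rw [abs_of_nonneg (div_nonneg (by norm_num) hN0.le : (0:ℝ) ≤ 2/N), abs_mul,
              abs_of_nonneg (by norm_num : (0:ℝ) ≤ 2)]
    -- scalar inequality 2/s ≤ 4N/π + 4/N
    have hsin : π / (2 * N) - (π / (2 * N)) ^ 3 / 4 < Real.sin (π / (2 * N)) := by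
      have h := Real.sin_gt_sub_cube hxpos
      have : 0 ≤ (π / (2 * N)) ^ 3 := by positivity
      linarith
    have key : 2 / s ≤ 4 * N / π + 4 / N := by
      apply key_aux N s hN2 hs0 hx1
      rw [hsdef]
      exact hsin
    -- assemble
    clear hS1 hS2 hmid hf0 hstep hfle hkn hsin hx1 hxpos hkdef k hfdef f hsdef
    obtain ⟨m, rfl⟩ : ∃ m, n = m + 1 := ⟨n - 1, by omega⟩
    have hm : (m + 1 : ℕ) - 1 = m := by omega
    rw [hm] at hterm hcos_sum
    rw [Finset.sum_range_succ']
    have hmcast : (m : ℝ) = N - 1 := by rw [hNdef]; push_cast; ring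
    have h0 : |4 * Real.sin (π * ((0:ℕ):ℝ) / (2 * N)) ^ 2 - 2 * (N - 1) / N|
        = 2 - 2 / N := by
      simp only [Nat.cast_zero, mul_zero, zero_div, Real.sin_zero]
      rw [show 4 * (0:ℝ) ^ 2 - 2 * (N - 1) / N = -(2 - 2/N) by field_simp; ring, abs_neg,
        abs_of_nonneg]
      have : 2 / N ≤ 1 := by rw [div_le_one hN0]; linarith
      linarith
    have hsum1 : ∑ i ∈ Finset.range m,
        |4 * Real.sin (π * (((i+1:ℕ)):ℝ) / (2 * N)) ^ 2 - 2 * (N - 1) / N|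
          ≤ (m : ℝ) * (2 / N) + 2 * (1 / s - 1) := by
      calc ∑ i ∈ Finset.range m,
          |4 * Real.sin (π * (((i+1:ℕ)):ℝ) / (2 * N)) ^ 2 - 2 * (N - 1) / N|
          ≤ ∑ i ∈ Finset.range m, (2 / N + 2 * |Real.cos (π * (i + 1) / N)|) := by
            apply Finset.sum_le_sum
            intro i hi
            have := hterm i hi
            push_cast
            push_cast at this
            exact this
        _ = (m:ℝ) * (2 / N) + 2 * ∑ i ∈ Finset.range m, |Real.cos (π * (i + 1) / N)| := by
            rw [Finset.sum_add_distrib, Finset.sum_const, Finset.card_range, ← Finset.mul_sum]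
            push_cast
            ring
        _ ≤ (m:ℝ) * (2 / N) + 2 * (1 / s - 1) := by linarith [hcos_sum]
    have hfin : (m:ℝ) * (2 / N) + 2 * (1 / s - 1) + (2 - 2 / N) ≤ 2 + 4 * N / π := by
      rw [hmcast]
      have h1s : 2 * (1 / s) = 2 / s := by ring
      have hNN : (N - 1) * (2 / N) = 2 - 2 / N := by field_simp
      rw [hNN]
      have h4N : 4 / N = 2 * (2 / N) := by ring
      linarith [key]
    calc (∑ i ∈ Finset.range m,
          |4 * Real.sin (π * (((i+1:ℕ)):ℝ) / (2 * N)) ^ 2 - 2 * (N - 1) / N|)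
          + |4 * Real.sin (π * ((0:ℕ):ℝ) / (2 * N)) ^ 2 - 2 * (N - 1) / N|
        ≤ ((m:ℝ) * (2 / N) + 2 * (1 / s - 1)) + (2 - 2 / N) := by
          rw [h0]; linarith [hsum1]
      _ ≤ 2 + 4 * N / π := hfin
end

section
/- Let T be a tree on n vertices (so m = n − 1 edges) with Laplacian eigenvalues μ_1 ≥ … ≥ μ_n = 0 and vertex degrees d_1 ≥ d_2 ≥ … ≥ d_n. For every k with 1 ≤ k ≤ n − 1, the Laplacian energy satisfies LE(T) ≥ 2(1 + Σ_{i=1}^k d_i − k·(2n−2)/n). -/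
open Finset Polynomial

open Matrix

open scoped MatrixOrder

lemma charpoly_conj_aux {n : ℕ} (P A B : Matrix (Fin n) (Fin n) ℝ)
    (h1 : P * B = 1) : (P * A * B).charpoly = A.charpoly := by
  unfold Matrix.charpoly
  have hPB : (P.map C) * (B.map C) = 1 := by
    rw [← Matrix.map_mul, h1]; ext i j; simp [Matrix.one_apply, apply_ite]
  have key : charmatrix (P * A * B) = P.map C * charmatrix A * B.map C := by
    unfold charmatrix
    rw [Matrix.mul_sub, Matrix.sub_mul]
    congr 1
    · rw [Matrix.mul_assoc]
      rw [(Matrix.scalar_commute (X : ℝ[X]) (fun r => Commute.all _ r) (B.map C)).eq]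
      rw [← Matrix.mul_assoc, hPB, Matrix.one_mul]
    · simp only [RingHom.mapMatrix_apply, ← Matrix.map_mul]
  rw [key, det_mul, det_mul]
  have : (P.map C).det * (B.map C).det = 1 := by
    rw [← det_mul, hPB, det_one]
  calc (P.map C).det * (charmatrix A).det * (B.map C).det
      = (P.map C).det * (B.map C).det * (charmatrix A).det := by ring
    _ = (charmatrix A).det := by rw [this, one_mul]

lemma charpoly_diagonal_aux {n : ℕ} (v : Fin n → ℝ) :
    (Matrix.diagonal v).charpoly = ∏ i, (X - C (v i)) := by
  unfold Matrix.charpoly charmatrix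
  have : Matrix.scalar (Fin n) (X : ℝ[X]) - (C : ℝ →+* ℝ[X]).mapMatrix (diagonal v)
      = Matrix.diagonal (fun i => X - C (v i)) := by
    ext i j
    by_cases h : i = j <;>
      simp [h, Matrix.scalar, Matrix.diagonal_apply, Matrix.one_apply]
  rw [this, Matrix.det_diagonal]

lemma eig_multiset {n : ℕ} {A : Matrix (Fin n) (Fin n) ℝ} (hA : A.IsHermitian) (μ : Fin n → ℝ)
    (hchar : A.charpoly = ∏ i, (X - C (μ i))) :
    Multiset.map hA.eigenvalues Finset.univ.val = Multiset.map μ Finset.univ.val := by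
  have hD : Matrix.diagonal ((RCLike.ofReal : ℝ → ℝ) ∘ hA.eigenvalues)
      = Matrix.diagonal hA.eigenvalues := by
    congr 1
  have hd : A.charpoly = ∏ i, (X - C (hA.eigenvalues i)) := by
    conv_lhs => rw [hA.spectral_theorem, Unitary.conjStarAlgAut_apply]
    rw [charpoly_conj_aux _ _ _ (Matrix.mem_unitaryGroup_iff.mp hA.eigenvectorUnitary.2),
      hD, charpoly_diagonal_aux]
  have h2 : ∏ i, (X - C (hA.eigenvalues i)) = ∏ i, (X - C (μ i)) := hd.symm.trans hchar
  have h3 : (Multiset.map (fun a => X - C a) (Multiset.map hA.eigenvalues Finset.univ.val)).prod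
      = (Multiset.map (fun a => X - C a) (Multiset.map μ Finset.univ.val)).prod := by
    rw [Multiset.map_map, Multiset.map_map, Finset.prod_map_val, Finset.prod_map_val]
    exact h2
  have := congrArg Polynomial.roots h3
  rwa [Polynomial.roots_multiset_prod_X_sub_C, Polynomial.roots_multiset_prod_X_sub_C] at this

lemma sum_transfer {n : ℕ} {A : Matrix (Fin n) (Fin n) ℝ} (hA : A.IsHermitian) (μ : Fin n → ℝ)
    (hchar : A.charpoly = ∏ i, (X - C (μ i))) (f : ℝ → ℝ) :
    ∑ j, f (hA.eigenvalues j) = ∑ i, f (μ i) := by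
  have h := eig_multiset hA μ hchar
  calc ∑ j, f (hA.eigenvalues j)
      = (Multiset.map f (Multiset.map hA.eigenvalues Finset.univ.val)).sum := by
        rw [Multiset.map_map, Finset.sum_map_val]; rfl
    _ = (Multiset.map f (Multiset.map μ Finset.univ.val)).sum := by rw [h]
    _ = ∑ i, f (μ i) := by rw [Multiset.map_map, Finset.sum_map_val]; rfl

section
variable {n k : ℕ}

lemma filter_lt_eq_map (hk : k ≤ n) :
    Finset.univ.filter (fun i : Fin n => (i : ℕ) < k)
      = Finset.univ.map ⟨Fin.castLE hk, Fin.castLE_injective hk⟩ := by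
  ext j
  simp only [Finset.mem_filter, Finset.mem_univ, true_and, Finset.mem_map,
    Function.Embedding.coeFn_mk]
  constructor
  · intro hj; exact ⟨⟨(j : ℕ), hj⟩, by ext; rfl⟩
  · rintro ⟨i, rfl⟩; exact i.2

lemma sum_filter_lt (hk : k ≤ n) (f : Fin n → ℝ) :
    ∑ i ∈ Finset.univ.filter (fun i : Fin n => (i : ℕ) < k), f i
      = ∑ i : Fin k, f (Fin.castLE hk i) := by
  rw [filter_lt_eq_map hk, Finset.sum_map]; rfl

lemma card_filter_lt (hk : k ≤ n) :
    (Finset.univ.filter (fun i : Fin n => (i : ℕ) < k)).card = k := by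
  rw [filter_lt_eq_map hk, Finset.card_map, Finset.card_univ, Fintype.card_fin]

end

lemma psd_cs {m : ℕ} (N : Matrix (Fin m) (Fin m) ℝ) (hN : N.PosSemidef) (x y : Fin m → ℝ) :
    (x ⬝ᵥ (N *ᵥ y))^2 ≤ (x ⬝ᵥ (N *ᵥ x)) * (y ⬝ᵥ (N *ᵥ y)) := by
  have hNsym : ∀ a b, N a b = N b a := by
    intro a b
    have := hN.1
    calc N a b = Nᴴ a b := by rw [this]
      _ = N b a := by simp [Matrix.conjTranspose_apply]
  have hsym : y ⬝ᵥ (N *ᵥ x) = x ⬝ᵥ (N *ᵥ y) := by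
    simp only [dotProduct, Matrix.mulVec]
    simp_rw [Finset.mul_sum]
    rw [Finset.sum_comm]
    apply Finset.sum_congr rfl
    intro i _
    apply Finset.sum_congr rfl
    intro j _
    rw [hNsym j i]; ring
  have key : ∀ s : ℝ, 0 ≤ (y ⬝ᵥ (N *ᵥ y)) * (s * s) + (2 * (x ⬝ᵥ (N *ᵥ y))) * s
      + (x ⬝ᵥ (N *ᵥ x)) := by
    intro s
    have h0 := hN.dotProduct_mulVec_nonneg (x + s • y)
    rw [star_trivial] at h0
    simp only [Matrix.mulVec_add, Matrix.mulVec_smul, dotProduct_add,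
      add_dotProduct, dotProduct_smul, smul_dotProduct,
      smul_eq_mul] at h0
    rw [hsym] at h0
    nlinarith [h0]
  have hd := discrim_le_zero key
  rw [discrim] at hd
  nlinarith [hd]

lemma exists_crossing {V : Type*} {G : SimpleGraph V} {S : Set V} {u w : V}
    (p : G.Walk u w) : u ∈ S → w ∉ S → ∃ a c, G.Adj a c ∧ a ∈ S ∧ c ∉ S := by
  induction p with
  | nil => intro hu hw; exact absurd hu hw
  | @cons a b c h p ih =>
    intro ha hc
    by_cases hb : b ∈ S
    · exact ih hb hc
    · exact ⟨a, b, h, ha, hb⟩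

lemma kyfan {n k : ℕ} (hk : k < n) (A : Matrix (Fin n) (Fin n) ℝ) (hA : A.IsHermitian)
    (μ : Fin n → ℝ) (hmono : Antitone μ) (hchar : A.charpoly = ∏ i, (X - C (μ i)))
    (X : Matrix (Fin n) (Fin k) ℝ) (hX : Xᴴ * X = 1) :
    Matrix.trace (Xᴴ * A * X) ≤ ∑ i ∈ Finset.univ.filter (fun i : Fin n => (i : ℕ) < k), μ i := by
  set V : Matrix (Fin n) (Fin n) ℝ := (hA.eigenvectorUnitary : Matrix (Fin n) (Fin n) ℝ) with hVdef
  have hV1 : V * Vᴴ = 1 := by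
    simpa [Matrix.star_eq_conjTranspose] using
      Matrix.mem_unitaryGroup_iff.mp hA.eigenvectorUnitary.2
  have hV2 : Vᴴ * V = 1 := by
    simpa [Matrix.star_eq_conjTranspose] using
      Matrix.mem_unitaryGroup_iff'.mp hA.eigenvectorUnitary.2
  set D : Matrix (Fin n) (Fin n) ℝ := Matrix.diagonal hA.eigenvalues with hDdef
  have hAD : A = V * D * Vᴴ := by
    have := hA.spectral_theorem
    have hD : Matrix.diagonal ((RCLike.ofReal : ℝ → ℝ) ∘ hA.eigenvalues) = D := by congr 1
    rw [hD] at this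
    simpa [Matrix.star_eq_conjTranspose] using this
  set Y : Matrix (Fin n) (Fin k) ℝ := Vᴴ * X with hYdef
  have hYc : Yᴴ = Xᴴ * V := by
    rw [hYdef, Matrix.conjTranspose_mul, Matrix.conjTranspose_conjTranspose]
  have hYY : Yᴴ * Y = 1 := by
    rw [hYc, hYdef, Matrix.mul_assoc, ← Matrix.mul_assoc V, hV1, Matrix.one_mul, hX]
  have htr : Xᴴ * A * X = Yᴴ * D * Y := by
    rw [hAD, hYc, hYdef]
    simp only [Matrix.mul_assoc]
  rw [htr]
  set c : Fin n → ℝ := fun j => ∑ i, (Y j i)^2 with hcdef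
  have hDY : D * Y = Matrix.of (fun j i => hA.eigenvalues j * Y j i) := by
    ext j i; simp [hDdef, Matrix.diagonal_mul]
  have htr2 : Matrix.trace (Yᴴ * D * Y) = ∑ j, hA.eigenvalues j * c j := by
    rw [Matrix.mul_assoc, hDY]
    simp only [Matrix.trace, Matrix.diag, Matrix.mul_apply, Matrix.conjTranspose_apply,
      star_trivial, Matrix.of_apply]
    rw [Finset.sum_comm]
    apply Finset.sum_congr rfl
    intro j _
    rw [Finset.mul_sum]
    apply Finset.sum_congr rfl
    intro i _
    ring
  rw [htr2]
  have hc0 : ∀ j, 0 ≤ c j := fun j => Finset.sum_nonneg fun i _ => sq_nonneg _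
  have hcsum : ∑ j, c j = (k : ℝ) := by
    have h1 : Matrix.trace (Yᴴ * Y) = (k : ℝ) := by rw [hYY]; simp
    have h2 : Matrix.trace (Yᴴ * Y) = ∑ j, c j := by
      simp only [Matrix.trace, Matrix.diag, Matrix.mul_apply, Matrix.conjTranspose_apply,
        star_trivial, hcdef]
      rw [Finset.sum_comm]
      apply Finset.sum_congr rfl
      intro j _
      apply Finset.sum_congr rfl
      intro i _
      ring
    rw [← h2, h1]
  have hc1 : ∀ j, c j ≤ 1 := by
    intro j
    set P : Matrix (Fin n) (Fin n) ℝ := Y * Yᴴ with hPdef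
    have hPP : P * P = P := by
      rw [hPdef, Matrix.mul_assoc, ← Matrix.mul_assoc Yᴴ, hYY, Matrix.one_mul]
    have hPsymm : ∀ a b, P a b = P b a := by
      intro a b
      simp only [hPdef, Matrix.mul_apply, Matrix.conjTranspose_apply, star_trivial]
      exact Finset.sum_congr rfl fun i _ => mul_comm _ _
    have hcP : c j = P j j := by
      simp only [hPdef, Matrix.mul_apply, Matrix.conjTranspose_apply, star_trivial, hcdef]
      congr 1; funext i; ring
    have hexp : P j j = ∑ l, (P j l)^2 := by
      conv_lhs => rw [← hPP]
      simp only [Matrix.mul_apply]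
      congr 1; funext l
      rw [hPsymm l j]; ring
    have hge : (P j j)^2 ≤ P j j := by
      conv_rhs => rw [hexp]
      exact Finset.single_le_sum (f := fun l => (P j l)^2) (fun l _ => sq_nonneg _)
        (Finset.mem_univ j)
    nlinarith [hc0 j, hcP]
  -- pivot argument
  set t : ℝ := μ ⟨k, hk⟩ with htdef
  have step1 : ∑ j, hA.eigenvalues j * c j
      = ∑ j, (hA.eigenvalues j - t) * c j + t * (k : ℝ) := by
    rw [← hcsum, Finset.mul_sum, ← Finset.sum_add_distrib]
    congr 1; funext j; ring
  have step2 : ∑ j, (hA.eigenvalues j - t) * c j ≤ ∑ j, max (hA.eigenvalues j - t) 0 := by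
    apply Finset.sum_le_sum
    intro j _
    rcases le_or_gt 0 (hA.eigenvalues j - t) with h | h
    · calc (hA.eigenvalues j - t) * c j ≤ (hA.eigenvalues j - t) * 1 :=
            mul_le_mul_of_nonneg_left (hc1 j) h
        _ ≤ max (hA.eigenvalues j - t) 0 := by rw [mul_one]; exact le_max_left _ _
    · calc (hA.eigenvalues j - t) * c j ≤ 0 :=
            mul_nonpos_of_nonpos_of_nonneg h.le (hc0 j)
        _ ≤ max (hA.eigenvalues j - t) 0 := le_max_right _ _
  have step3 : ∑ j, max (hA.eigenvalues j - t) 0 = ∑ j, max (μ j - t) 0 :=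
    sum_transfer hA μ hchar (fun a => max (a - t) 0)
  have step4 : ∑ j, max (μ j - t) 0
      = ∑ j ∈ Finset.univ.filter (fun i : Fin n => (i : ℕ) < k), (μ j - t) := by
    rw [← Finset.sum_filter_add_sum_filter_not Finset.univ (fun i : Fin n => (i : ℕ) < k)]
    have hz : ∑ j ∈ Finset.univ.filter (fun i : Fin n => ¬ (i : ℕ) < k), max (μ j - t) 0 = 0 := by
      apply Finset.sum_eq_zero
      intro j hj
      rw [Finset.mem_filter] at hj
      have : μ j ≤ t := hmono (by simpa [Fin.le_def] using Nat.le_of_not_lt hj.2)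
      simp [max_eq_right, sub_nonpos.mpr this]
    rw [hz, add_zero]
    apply Finset.sum_congr rfl
    intro j hj
    rw [Finset.mem_filter] at hj
    have : t ≤ μ j := hmono (by simpa [Fin.le_def] using Nat.le_of_lt hj.2)
    exact max_eq_left (sub_nonneg.mpr this)
  have step5 : ∑ j ∈ Finset.univ.filter (fun i : Fin n => (i : ℕ) < k), (μ j - t) + t * k
      = ∑ j ∈ Finset.univ.filter (fun i : Fin n => (i : ℕ) < k), μ j := by
    rw [Finset.sum_sub_distrib, Finset.sum_const, card_filter_lt hk.le, nsmul_eq_mul]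
    ring
  calc ∑ j, hA.eigenvalues j * c j
      = ∑ j, (hA.eigenvalues j - t) * c j + t * (k : ℝ) := step1
    _ ≤ ∑ j, max (hA.eigenvalues j - t) 0 + t * k := by linarith [step2]
    _ = ∑ j, max (μ j - t) 0 + t * k := by rw [step3]
    _ = ∑ j ∈ Finset.univ.filter (fun i : Fin n => (i : ℕ) < k), (μ j - t) + t * k := by
        rw [step4]
    _ = _ := step5

set_option maxHeartbeats 1600000 in
lemma grone {n k : ℕ} (hk : k < n) (hk1 : 1 ≤ k) (G : SimpleGraph (Fin n))
    [DecidableRel G.Adj] (hc : G.Connected) (μ : Fin n → ℝ) (hmono : Antitone μ)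
    (hchar : (G.lapMatrix ℝ).charpoly = ∏ i, (X - C (μ i)))
    (ι : Fin k → Fin n) (hι : Function.Injective ι) :
    1 + ∑ i : Fin k, (G.degree (ι i) : ℝ)
      ≤ ∑ i ∈ Finset.univ.filter (fun i : Fin n => (i : ℕ) < k), μ i := by
  classical
  set L : Matrix (Fin n) (Fin n) ℝ := G.lapMatrix ℝ with hLdef
  have hPSD : L.PosSemidef := SimpleGraph.posSemidef_lapMatrix ℝ G
  have hL : L.IsHermitian := hPSD.1
  have hLsym : ∀ a b, L a b = L b a := by
    intro a b
    calc L a b = Lᴴ a b := by rw [hL]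
      _ = L b a := by simp [Matrix.conjTranspose_apply]
  have hLdiag : ∀ v, L v v = (G.degree v : ℝ) := by
    intro v
    simp [hLdef, SimpleGraph.lapMatrix, SimpleGraph.degMatrix, Matrix.diagonal_apply]
  have hLoff : ∀ v w, v ≠ w → L v w = -(if G.Adj v w then (1:ℝ) else 0) := by
    intro v w hvw
    simp [hLdef, SimpleGraph.lapMatrix, SimpleGraph.degMatrix, Matrix.diagonal_apply, hvw]
  -- the inclusion matrix
  set P : Matrix (Fin n) (Fin k) ℝ := Matrix.of (fun v i => if v = ι i then 1 else 0) with hPdef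
  have hPapp : ∀ v i, P v i = if v = ι i then 1 else 0 := fun v i => rfl
  have hPvec : ∀ (x : Fin k → ℝ) (i : Fin k), (P *ᵥ x) (ι i) = x i := by
    intro x i
    simp only [Matrix.mulVec, dotProduct, hPapp]
    rw [Finset.sum_eq_single i]
    · simp
    · intro b _ hb
      have : ι i ≠ ι b := fun h => hb (hι h).symm
      simp [this]
    · simp
  have hPvec0 : ∀ (x : Fin k → ℝ) (w : Fin n), w ∉ Set.range ι → (P *ᵥ x) w = 0 := by
    intro x w hw
    simp only [Matrix.mulVec, dotProduct, hPapp]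
    apply Finset.sum_eq_zero
    intro i _
    have : w ≠ ι i := fun h => hw ⟨i, h.symm⟩
    simp [this]
  have hPtP : Pᴴ * P = 1 := by
    ext i j
    simp only [Matrix.mul_apply, Matrix.conjTranspose_apply, star_trivial, hPapp,
      Matrix.one_apply]
    rw [Finset.sum_eq_single (ι i)]
    · by_cases h : i = j
      · simp [h]
      · have : ι i ≠ ι j := fun hh => h (hι hh)
        simp [this, h]
    · intro b _ hb; simp [hb]
    · simp
  have hLP : ∀ v i, (L * P) v i = L v (ι i) := by
    intro v i
    simp only [Matrix.mul_apply, hPapp]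
    rw [Finset.sum_eq_single (ι i)]
    · simp
    · intro b _ hb; simp [hb]
    · simp
  set LS : Matrix (Fin k) (Fin k) ℝ := Pᴴ * L * P with hLSdef
  have hLS : ∀ i j, LS i j = L (ι i) (ι j) := by
    intro i j
    rw [hLSdef, Matrix.mul_assoc, Matrix.mul_apply]
    simp only [Matrix.conjTranspose_apply, star_trivial, hPapp, hLP]
    rw [Finset.sum_eq_single (ι i)]
    · simp
    · intro b _ hb; simp [hb]
    · simp
  have hLSsym : ∀ i j, LS i j = LS j i := by
    intro i j; rw [hLS, hLS, hLsym]
  have hLSH : LS.IsHermitian := by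
    rw [hLSdef]
    ext i j
    simp only [Matrix.conjTranspose_apply, star_trivial]
    show (Pᴴ * L * P) j i = (Pᴴ * L * P) i j
    rw [← hLSdef, hLSsym]
  -- positive definiteness of LS
  have hwex : ∃ w : Fin n, w ∉ Set.range ι := by
    by_contra hcon
    push_neg at hcon
    have hsurj : Function.Surjective ι := fun w => hcon w
    have := Fintype.card_le_of_surjective ι hsurj
    simp at this
    omega
  have hPD : LS.PosDef := by
    refine Matrix.PosDef.of_dotProduct_mulVec_pos hLSH fun x hx => ?_
    rw [star_trivial]
    have hmv : LS *ᵥ x = Pᴴ *ᵥ (L *ᵥ (P *ᵥ x)) := by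
      rw [Matrix.mulVec_mulVec, Matrix.mulVec_mulVec, hLSdef]
    set y : Fin n → ℝ := P *ᵥ x with hydef
    have hdot : x ⬝ᵥ (LS *ᵥ x) = y ⬝ᵥ (L *ᵥ y) := by
      rw [hmv, dotProduct_mulVec x Pᴴ _]
      congr 1
      rw [Matrix.vecMul_conjTranspose]
      simp [hydef]
    rw [hdot]
    rcases lt_or_eq_of_le (by simpa [star_trivial] using hPSD.dotProduct_mulVec_nonneg y) with h | h
    · exact h
    · exfalso
      have hzero : Matrix.toLinearMap₂' ℝ L y y = 0 := by
        rw [Matrix.toLinearMap₂'_apply']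
        exact h.symm
      have hreach := (SimpleGraph.lapMatrix_toLinearMap₂'_apply'_eq_zero_iff_forall_reachable
        G y).mp hzero
      obtain ⟨w, hw⟩ := hwex
      obtain ⟨i, hxi⟩ := Function.ne_iff.mp hx
      have h1 : y (ι i) = y w := hreach (ι i) w (hc.preconnected (ι i) w)
      rw [hydef, hPvec x i, hPvec0 x w hw] at h1
      exact hxi (by simpa using h1)
  have hdetLS : IsUnit LS.det := hPD.isUnit.map (Matrix.detMonoidHom)
  set N : Matrix (Fin k) (Fin k) ℝ := LS⁻¹ with hNdef
  have hNPD : N.PosDef := hPD.inv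
  have hLSN : LS * N = 1 := Matrix.mul_nonsing_inv LS hdetLS
  have hNLS : N * LS = 1 := Matrix.nonsing_inv_mul LS hdetLS
  set R : Matrix (Fin k) (Fin k) ℝ := CFC.sqrt N with hRdef
  have hRR : R * R = N := CFC.sqrt_mul_sqrt_self N hNPD.posSemidef.nonneg
  have hRH : Rᴴ = R := (CFC.sqrt_nonneg N).posSemidef.1
  have hdetR : IsUnit R.det := by
    have h1 : R.det * R.det = N.det := by rw [← Matrix.det_mul, hRR]
    have h2 : 0 < N.det := hNPD.det_pos
    have : R.det ≠ 0 := by intro h; rw [h, mul_zero] at h1; exact h2.ne h1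
    exact isUnit_iff_ne_zero.mpr this
  have hRRinv : R * R⁻¹ = 1 := Matrix.mul_nonsing_inv R hdetR
  have hRinvR : R⁻¹ * R = 1 := Matrix.nonsing_inv_mul R hdetR
  have hLSRR : LS = R⁻¹ * R⁻¹ := by
    have : N⁻¹ = (R * R)⁻¹ := by rw [hRR]
    rw [Matrix.mul_inv_rev] at this
    rw [← this, hNdef, Matrix.nonsing_inv_nonsing_inv LS hdetLS]
  set sL : Matrix (Fin n) (Fin n) ℝ := CFC.sqrt L with hsLdef
  have hsq : sL * sL = L := CFC.sqrt_mul_sqrt_self L hPSD.nonneg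
  have hsH : sLᴴ = sL := (CFC.sqrt_nonneg L).posSemidef.1
  set Xm : Matrix (Fin n) (Fin k) ℝ := sL * P * R with hXmdef
  have hXmH : Xmᴴ = R * (Pᴴ * sL) := by
    rw [hXmdef, Matrix.conjTranspose_mul, Matrix.conjTranspose_mul, hRH, hsH]
  have hXX : Xmᴴ * Xm = 1 := by
    have e1 : Xmᴴ * Xm = R * (Pᴴ * (sL * (sL * (P * R)))) := by
      rw [hXmH, hXmdef]; simp only [Matrix.mul_assoc]
    rw [e1, ← Matrix.mul_assoc sL sL, hsq]
    have e2 : Pᴴ * (L * (P * R)) = LS * R := by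
      rw [hLSdef]; simp only [Matrix.mul_assoc]
    rw [e2, hLSRR]
    have e3 : R * (R⁻¹ * R⁻¹ * R) = R * (R⁻¹ * (R⁻¹ * R)) := by simp only [Matrix.mul_assoc]
    rw [e3, hRinvR, Matrix.mul_one, hRRinv]
  set M : Matrix (Fin k) (Fin k) ℝ := Pᴴ * (L * (L * P)) with hMdef
  have htrace1 : Matrix.trace (Xmᴴ * L * Xm) = Matrix.trace (M * N) := by
    have e1 : Xmᴴ * L * Xm = R * (Pᴴ * (sL * (L * (sL * (P * R))))) := by
      rw [hXmH, hXmdef]; simp only [Matrix.mul_assoc]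
    have key : sL * (L * (sL * (P * R))) = L * (L * (P * R)) := by
      conv_lhs => rw [← hsq]
      conv_rhs => rw [← hsq]
      simp only [Matrix.mul_assoc]
    rw [e1, key]
    have e2 : Pᴴ * (L * (L * (P * R))) = M * R := by
      rw [hMdef]; simp only [Matrix.mul_assoc]
    rw [e2, Matrix.trace_mul_comm, Matrix.mul_assoc, hRR]
  set Q : Matrix (Fin n) (Fin k) ℝ := L * P - P * LS with hQdef
  have hPLS : ∀ (j i : Fin k), (P * LS) (ι j) i = LS j i := by
    intro j i
    rw [Matrix.mul_apply]
    rw [Finset.sum_eq_single j]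
    · simp [hPapp]
    · intro b _ hb
      have : ι j ≠ ι b := fun h => hb (hι h).symm
      simp [hPapp, this]
    · simp
  have hQι : ∀ (j i : Fin k), Q (ι j) i = 0 := by
    intro j i
    rw [hQdef, Matrix.sub_apply, hLP, hPLS, hLS, sub_self]
  have hQout : ∀ w, w ∉ Set.range ι → ∀ i, Q w i = L w (ι i) := by
    intro w hw i
    rw [hQdef, Matrix.sub_apply, hLP]
    have h0 : (P * LS) w i = 0 := by
      rw [Matrix.mul_apply]
      apply Finset.sum_eq_zero
      intro m _
      have : w ≠ ι m := fun h => hw ⟨m, h.symm⟩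
      simp [hPapp, this]
    rw [h0, sub_zero]
  have hPQ : Pᴴ * Q = 0 := by
    rw [hQdef, Matrix.mul_sub, ← Matrix.mul_assoc, ← Matrix.mul_assoc, hPtP, Matrix.one_mul,
      ← hLSdef, sub_self]
  have hQP : Qᴴ * P = 0 := by
    have hcc := congrArg Matrix.conjTranspose hPQ
    rwa [Matrix.conjTranspose_mul, Matrix.conjTranspose_conjTranspose,
      Matrix.conjTranspose_zero] at hcc
  have hMQ : M = LS * LS + Qᴴ * Q := by
    have hLPd : L * P = P * LS + Q := by rw [hQdef]; abel
    have hM2 : M = (L * P)ᴴ * (L * P) := by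
      rw [hMdef, Matrix.conjTranspose_mul, hL.eq]
      simp only [Matrix.mul_assoc]
    rw [hM2, hLPd, Matrix.conjTranspose_add, Matrix.add_mul, Matrix.mul_add, Matrix.mul_add]
    have t1 : (P * LS)ᴴ = LS * Pᴴ := by rw [Matrix.conjTranspose_mul, hLSH.eq]
    have t2 : (P * LS)ᴴ * (P * LS) = LS * LS := by
      rw [t1]
      calc LS * Pᴴ * (P * LS) = LS * ((Pᴴ * P) * LS) := by simp only [Matrix.mul_assoc]
        _ = LS * LS := by rw [hPtP, Matrix.one_mul]
    have t3 : (P * LS)ᴴ * Q = 0 := by rw [t1, Matrix.mul_assoc, hPQ, Matrix.mul_zero]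
    have t4 : Qᴴ * (P * LS) = 0 := by rw [← Matrix.mul_assoc, hQP, Matrix.zero_mul]
    rw [t2, t3, t4, add_zero, zero_add]
  have htrDecomp : Matrix.trace (M * N) = Matrix.trace LS + Matrix.trace (Qᴴ * Q * N) := by
    rw [hMQ, Matrix.add_mul, Matrix.trace_add, Matrix.mul_assoc, hLSN, Matrix.mul_one]
  set b : Fin k → ℝ := LS *ᵥ (fun _ => 1) with hbdef
  have hNb : N *ᵥ b = fun _ => (1:ℝ) := by
    rw [hbdef, Matrix.mulVec_mulVec, hNLS, Matrix.one_mulVec]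
  have hLcol : ∀ v, ∑ w, L w v = 0 := by
    intro v
    have h0 : (L *ᵥ (fun _ => (1:ℝ))) v = 0 := by
      rw [hLdef, SimpleGraph.lapMatrix_mulVec_const_eq_zero]
      rfl
    calc ∑ w, L w v = ∑ w, L v w := Finset.sum_congr rfl fun w _ => hLsym w v
      _ = (L *ᵥ fun _ => 1) v := by simp [Matrix.mulVec, dotProduct]
      _ = 0 := h0
  have hQcolsum : ∀ i, ∑ w, Q w i = - b i := by
    intro i
    rw [hQdef]
    simp only [Matrix.sub_apply, Finset.sum_sub_distrib]
    have h1 : ∑ w, (L * P) w i = 0 := by simp_rw [hLP]; exact hLcol (ι i)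
    have h2 : ∑ w, (P * LS) w i = b i := by
      simp only [Matrix.mul_apply]
      rw [Finset.sum_comm]
      have hcol : ∀ m, ∑ w, P w m * LS m i = LS m i := by
        intro m
        rw [← Finset.sum_mul]
        have hone : ∑ w, P w m = 1 := by
          simp only [hPapp]
          rw [Finset.sum_eq_single (ι m)] <;> simp +contextual
        rw [hone, one_mul]
      calc ∑ m, ∑ w, P w m * LS m i = ∑ m, LS m i := Finset.sum_congr rfl fun m _ => hcol m
        _ = ∑ m, LS i m := Finset.sum_congr rfl fun m _ => hLSsym m i
        _ = b i := by simp [hbdef, Matrix.mulVec, dotProduct]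
    rw [h1, h2, zero_sub]
  set mw : Fin n → ℕ := fun w =>
    if w ∈ Set.range ι then 0 else (Finset.univ.filter fun i => G.Adj w (ι i)).card with hmwdef
  have hQrowsum : ∀ w, ∑ i, Q w i = -(mw w : ℝ) := by
    intro w
    by_cases hw : w ∈ Set.range ι
    · have hz : ∑ i, Q w i = 0 := by
        obtain ⟨j, rfl⟩ := hw
        exact Finset.sum_eq_zero fun i _ => hQι j i
      rw [hz, hmwdef]
      simp [hw]
    · have he : ∀ i, Q w i = -(if G.Adj w (ι i) then (1:ℝ) else 0) := by
        intro i
        rw [hQout w hw i, hLoff]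
        exact fun h => hw ⟨i, h.symm⟩
      calc ∑ i, Q w i = ∑ i, -(if G.Adj w (ι i) then (1:ℝ) else 0) :=
            Finset.sum_congr rfl fun i _ => he i
        _ = -∑ i, (if G.Adj w (ι i) then (1:ℝ) else 0) := by rw [Finset.sum_neg_distrib]
        _ = -(mw w : ℝ) := by
            rw [Finset.sum_boole, hmwdef]
            simp [hw]
  have hmwsum : ∑ w, (mw w : ℝ) = ∑ i, b i := by
    have h1 : ∑ w, ∑ i, Q w i = ∑ i, ∑ w, Q w i := Finset.sum_comm
    have e1 : ∑ w, ∑ i, Q w i = -∑ w, (mw w : ℝ) := by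
      rw [← Finset.sum_neg_distrib]
      exact Finset.sum_congr rfl fun w _ => hQrowsum w
    have e2 : ∑ i, ∑ w, Q w i = -∑ i, b i := by
      rw [← Finset.sum_neg_distrib]
      exact Finset.sum_congr rfl fun i _ => hQcolsum i
    have := e1.symm.trans (h1.trans e2)
    linarith [this]
  set t : ℝ := ∑ i, b i with htdef
  have hbNb : b ⬝ᵥ (N *ᵥ b) = t := by
    rw [hNb, htdef]
    simp [dotProduct]
  have hcross : ∃ w, w ∉ Set.range ι ∧ 1 ≤ mw w := by
    obtain ⟨w0, hw0⟩ := hwex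
    obtain ⟨p⟩ := hc.preconnected (ι ⟨0, hk1⟩) w0
    obtain ⟨a, c, hadj, ha, hcnot⟩ := exists_crossing (S := Set.range ι) p ⟨⟨0, hk1⟩, rfl⟩ hw0
    obtain ⟨ia, hia⟩ := ha
    refine ⟨c, hcnot, ?_⟩
    have hne : (Finset.univ.filter fun i => G.Adj c (ι i)).Nonempty :=
      ⟨ia, by simp [hia, hadj.symm]⟩
    have : mw c = (Finset.univ.filter fun i => G.Adj c (ι i)).card := by
      rw [hmwdef]; simp [hcnot]
    rw [this]
    exact Finset.card_pos.mpr hne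
  have ht1 : (1:ℝ) ≤ t := by
    obtain ⟨w, hwnot, hw1⟩ := hcross
    rw [← hmwsum]
    have h1 : (1:ℝ) ≤ (mw w : ℝ) := by exact_mod_cast hw1
    calc (1:ℝ) ≤ (mw w : ℝ) := h1
      _ ≤ ∑ w, (mw w : ℝ) :=
          Finset.single_le_sum (f := fun w => (mw w : ℝ))
            (fun w _ => Nat.cast_nonneg _) (Finset.mem_univ w)
  have ht0 : 0 < t := lt_of_lt_of_le one_pos ht1
  have htrQ : Matrix.trace (Qᴴ * Q * N)
      = ∑ w, (fun i => Q w i) ⬝ᵥ (N *ᵥ (fun i => Q w i)) := by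
    rw [Matrix.mul_assoc, Matrix.trace_mul_comm]
    simp only [Matrix.trace, Matrix.diag, Matrix.mul_apply, Matrix.conjTranspose_apply,
      star_trivial, dotProduct, Matrix.mulVec]
    apply Finset.sum_congr rfl
    intro w _
    simp_rw [Finset.sum_mul, Finset.mul_sum]
    rw [Finset.sum_comm]
    apply Finset.sum_congr rfl
    intro j _
    apply Finset.sum_congr rfl
    intro i _
    ring
  have hrNb : ∀ w, (fun i => Q w i) ⬝ᵥ (N *ᵥ b) = -(mw w : ℝ) := by
    intro w
    rw [hNb]
    simpa [dotProduct] using hQrowsum w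
  have hlower : ∀ w, ((mw w : ℝ))^2 / t ≤ (fun i => Q w i) ⬝ᵥ (N *ᵥ (fun i => Q w i)) := by
    intro w
    have hcs := psd_cs N hNPD.posSemidef (fun i => Q w i) b
    rw [hrNb w, hbNb] at hcs
    rw [div_le_iff₀ ht0]
    nlinarith [hcs]
  have hsum1 : (1:ℝ) ≤ Matrix.trace (Qᴴ * Q * N) := by
    rw [htrQ]
    have step1 : ∑ w, ((mw w : ℝ))^2 / t
        ≤ ∑ w, (fun i => Q w i) ⬝ᵥ (N *ᵥ (fun i => Q w i)) :=
      Finset.sum_le_sum fun w _ => hlower w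
    have step2 : (1:ℝ) ≤ ∑ w, ((mw w : ℝ))^2 / t := by
      have hterm : ∀ w, (mw w : ℝ) / t ≤ ((mw w : ℝ))^2 / t := by
        intro w
        have h2 : (mw w : ℝ) ≤ ((mw w : ℝ))^2 := by
          have h3 : mw w ≤ (mw w)^2 := Nat.le_self_pow two_ne_zero (mw w)
          exact_mod_cast h3
        have h4 := mul_le_mul_of_nonneg_right h2 (inv_nonneg.mpr ht0.le)
        simpa [div_eq_mul_inv] using h4
      have hsumdiv : ∑ w, (mw w : ℝ) / t = 1 := by
        rw [← Finset.sum_div, hmwsum]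
        exact div_self (ne_of_gt ht0)
      calc (1:ℝ) = ∑ w, (mw w : ℝ) / t := hsumdiv.symm
        _ ≤ ∑ w, ((mw w : ℝ))^2 / t := Finset.sum_le_sum fun w _ => hterm w
    linarith
  have htrLS : Matrix.trace LS = ∑ i : Fin k, (G.degree (ι i) : ℝ) := by
    simp only [Matrix.trace, Matrix.diag]
    exact Finset.sum_congr rfl fun i _ => by rw [hLS, hLdiag]
  have hKF := kyfan hk L hL μ hmono hchar Xm hXX
  rw [htrace1, htrDecomp] at hKF
  linarith [hsum1, hKF, htrLS.ge, htrLS.le]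

theorem tree_laplacian_energy_lower (n : ℕ) (hn : 1 ≤ n)
    (G : SimpleGraph (Fin n)) [DecidableRel G.Adj] (hT : G.IsTree)
    (μ : Fin n → ℝ) (hmono : Antitone μ)
    (hchar : (G.lapMatrix ℝ).charpoly = ∏ i, (X - C (μ i)))
    (d : Fin n → ℕ) (hd : Antitone d)
    (hperm : ∃ e : Equiv.Perm (Fin n), ∀ i, d i = G.degree (e i)) :
    ∀ k, 1 ≤ k → k ≤ n - 1 →
      ∑ i, |μ i - (2 * (n : ℝ) - 2) / n| ≥
        2 * (1 + (∑ i ∈ Finset.univ.filter fun i : Fin n => (i : ℕ) < k, (d i : ℝ)) -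
          k * ((2 * (n : ℝ) - 2) / n)) := by
  intro k hk1 hkn
  obtain ⟨e, he⟩ := hperm
  have hk : k < n := by omega
  set a : ℝ := (2 * (n : ℝ) - 2) / n with hadef
  have hn0 : (n : ℝ) ≠ 0 := Nat.cast_ne_zero.mpr (by omega)
  -- trace of the Laplacian equals the sum of the μ's
  have hsplit : (G.lapMatrix ℝ).charpoly.Splits := by
    rw [hchar]
    exact Polynomial.Splits.prod fun i _ => Polynomial.Splits.X_sub_C _
  have hroots : (G.lapMatrix ℝ).charpoly.roots = Multiset.map μ Finset.univ.val := by
    rw [hchar, ← Finset.prod_map_val]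
    have : Multiset.map (fun i => X - C (μ i)) Finset.univ.val
        = Multiset.map (fun x => X - C x) (Multiset.map μ Finset.univ.val) := by
      rw [Multiset.map_map]; rfl
    rw [this, Polynomial.roots_multiset_prod_X_sub_C]
  have htr1 : (G.lapMatrix ℝ).trace = ∑ i, μ i := by
    rw [Matrix.trace_eq_sum_roots_charpoly_of_splits hsplit, hroots, Finset.sum_map_val]
  have htr2 : (G.lapMatrix ℝ).trace = 2 * (n : ℝ) - 2 := by
    have hdiag : ∀ v, (G.lapMatrix ℝ) v v = (G.degree v : ℝ) := by
      intro v
      simp [SimpleGraph.lapMatrix, SimpleGraph.degMatrix, Matrix.diagonal_apply]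
    have h1 : (G.lapMatrix ℝ).trace = ((∑ v, G.degree v : ℕ) : ℝ) := by
      simp only [Matrix.trace, Matrix.diag, Nat.cast_sum]
      exact Finset.sum_congr rfl fun v _ => hdiag v
    have hcard : G.edgeFinset.card = n - 1 := by
      have h2 := hT.card_edgeFinset
      simp only [Fintype.card_fin] at h2
      omega
    rw [h1, SimpleGraph.sum_degrees_eq_twice_card_edges, hcard]
    push_cast [Nat.cast_sub hn]
    ring
  have hsum0 : ∑ i, (μ i - a) = 0 := by
    rw [Finset.sum_sub_distrib, Finset.sum_const, ← htr1, htr2, Finset.card_univ,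
      Fintype.card_fin, nsmul_eq_mul, hadef]
    field_simp
    ring
  -- abs bound
  set F := Finset.univ.filter (fun i : Fin n => (i : ℕ) < k) with hFdef
  have habs : ∑ i, |μ i - a| ≥ 2 * ∑ i ∈ F, (μ i - a) := by
    have hsplitsum : ∑ i, |μ i - a|
        = ∑ i ∈ F, |μ i - a| + ∑ i ∈ Finset.univ.filter (fun i : Fin n => ¬ (i : ℕ) < k), |μ i - a| :=
      (Finset.sum_filter_add_sum_filter_not _ _ _).symm
    have hsplitsum0 : ∑ i ∈ F, (μ i - a) + ∑ i ∈ Finset.univ.filter (fun i : Fin n => ¬ (i : ℕ) < k), (μ i - a) = 0 := by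
      rw [Finset.sum_filter_add_sum_filter_not]; exact hsum0
    have h1 : ∑ i ∈ F, (μ i - a) ≤ ∑ i ∈ F, |μ i - a| :=
      Finset.sum_le_sum fun i _ => le_abs_self _
    have h2 : |∑ i ∈ Finset.univ.filter (fun i : Fin n => ¬ (i : ℕ) < k), (μ i - a)|
        ≤ ∑ i ∈ Finset.univ.filter (fun i : Fin n => ¬ (i : ℕ) < k), |μ i - a| :=
      Finset.abs_sum_le_sum_abs _ _
    have h3 : ∑ i ∈ F, (μ i - a)
        ≤ |∑ i ∈ Finset.univ.filter (fun i : Fin n => ¬ (i : ℕ) < k), (μ i - a)| := by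
      have heq : ∑ i ∈ F, (μ i - a)
          = -(∑ i ∈ Finset.univ.filter (fun i : Fin n => ¬ (i : ℕ) < k), (μ i - a)) := by
        linarith [hsplitsum0]
      rw [heq]
      exact neg_le_abs _
    linarith
  -- Grone application
  set ι : Fin k → Fin n := fun i => e (Fin.castLE hk.le i) with hιdef
  have hι : Function.Injective ι := fun i j h =>
    Fin.castLE_injective hk.le (e.injective h)
  have hG := grone hk hk1 G hT.isConnected μ hmono hchar ι hι
  have hdeg : ∑ i : Fin k, (G.degree (ι i) : ℝ) = ∑ i ∈ F, (d i : ℝ) := by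
    rw [hFdef, sum_filter_lt hk.le]
    exact Finset.sum_congr rfl fun i _ => by rw [hιdef, ← he]
  have hμF : ∑ i ∈ F, (μ i - a) = ∑ i ∈ F, μ i - k * a := by
    rw [Finset.sum_sub_distrib, Finset.sum_const, hFdef, card_filter_lt hk.le, nsmul_eq_mul]
  rw [ge_iff_le]
  calc 2 * (1 + (∑ i ∈ F, (d i : ℝ)) - k * a)
      = 2 * ((1 + ∑ i ∈ F, (d i : ℝ)) - k * a) := by ring
    _ ≤ 2 * (∑ i ∈ F, μ i - k * a) := by
        have := hG
        rw [hdeg] at this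
        linarith
    _ = 2 * ∑ i ∈ F, (μ i - a) := by rw [hμF]
    _ ≤ ∑ i, |μ i - a| := habs
end

section
/- Let T be a tree on n ≥ 4 vertices with exactly s internal (non-pendent) vertices, where 1 ≤ s ≤ n − 2. Assuming the Grone inequality Σ_{i=1}^s μ_i ≥ 1 + Σ_{i=1}^s d_i, one has LE(T) ≥ 2n + 2s − 2 − 2s·(2n−2)/n; moreover if ((π−2)/π)·n ≥ s + 2 − 2s/n, then LE(T) ≥ 2 + 4n/π. -/
open Finset Polynomial Real

set_option maxHeartbeats 1000000

lemma aux_card_filter_lt (n s : ℕ) (h : s ≤ n) :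
    ((univ : Finset (Fin n)).filter fun i : Fin n => (i : ℕ) < s).card = s := by
  have : ((univ : Finset (Fin n)).filter fun i : Fin n => (i : ℕ) < s) =
      (Finset.range s).attachFin (fun m hm => lt_of_lt_of_le (mem_range.mp hm) h) := by
    ext i; simp
  rw [this, card_attachFin, card_range]

theorem tree_energy_via_internal_vertices (n : ℕ) (hn : 4 ≤ n)
    (G : SimpleGraph (Fin n)) [DecidableRel G.Adj] (hT : G.IsTree)
    (μ : Fin n → ℝ) (hmono : Antitone μ)
    (hchar : (G.lapMatrix ℝ).charpoly = ∏ i, (X - C (μ i)))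
    (d : Fin n → ℕ) (hdmono : Antitone d)
    (hperm : ∃ e : Equiv.Perm (Fin n), ∀ i, d i = G.degree (e i))
    (s : ℕ) (hs : s = (Finset.univ.filter fun v : Fin n => 2 ≤ G.degree v).card)
    (hs1 : 1 ≤ s) (hs2 : s ≤ n - 2)
    (hGrone : (∑ i ∈ Finset.univ.filter fun i : Fin n => (i : ℕ) < s, μ i) ≥
      1 + ∑ i ∈ Finset.univ.filter fun i : Fin n => (i : ℕ) < s, (d i : ℝ)) :
    ∑ i, |μ i - (2 * (n : ℝ) - 2) / n| ≥
        2 * n + 2 * s - 2 - 2 * s * ((2 * (n : ℝ) - 2) / n) ∧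
      (((Real.pi - 2) / Real.pi) * n ≥ s + 2 - 2 * s / n →
        ∑ i, |μ i - (2 * (n : ℝ) - 2) / n| ≥ 2 + 4 * n / Real.pi) := by
  obtain ⟨e, he⟩ := hperm
  have hNe : NeZero n := ⟨by omega⟩
  have hn0 : (0 : ℝ) < n := by positivity
  have hnR : (4 : ℝ) ≤ n := by exact_mod_cast hn
  set dbar : ℝ := (2 * (n : ℝ) - 2) / n with hdbar
  set S : Finset (Fin n) := Finset.univ.filter fun i : Fin n => (i : ℕ) < s with hS
  have hsn : s ≤ n := by omega
  -- sum of degrees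
  have hdegsum : ∑ v, G.degree v = 2 * n - 2 := by
    have hc := hT.card_edgeFinset
    simp only [Fintype.card_fin] at hc
    rw [G.sum_degrees_eq_twice_card_edges]
    omega
  have hdsum : ∑ i, d i = 2 * n - 2 := by
    calc ∑ i, d i = ∑ i, G.degree (e i) := Finset.sum_congr rfl (fun i _ => he i)
    _ = ∑ v, G.degree v := Fintype.sum_equiv e _ _ (fun i => rfl)
    _ = 2 * n - 2 := hdegsum
  -- trace of Laplacian
  have htr : ∑ i, μ i = 2 * (n : ℝ) - 2 := by
    have h1 : (G.lapMatrix ℝ).trace = ∑ v, (G.degree v : ℝ) := by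
      simp [Matrix.trace, SimpleGraph.lapMatrix, Matrix.diag, SimpleGraph.degMatrix]
    have h2 : (G.lapMatrix ℝ).trace = ∑ i, μ i := by
      rw [Matrix.trace_eq_neg_charpoly_coeff, hchar]
      have h := Polynomial.prod_X_sub_C_coeff_card_pred (univ : Finset (Fin n)) μ
        (by simp only [card_univ, Fintype.card_fin]; omega)
      simp only [card_univ, Fintype.card_fin] at h ⊢
      rw [h, neg_neg]
    rw [← h2, h1, ← Nat.cast_sum, hdegsum]
    rw [Nat.cast_sub (by omega)]
    push_cast
    ring
  -- minimum degree 1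
  have hd1 : ∀ i, 1 ≤ d i := by
    intro i
    rw [he i]
    set v := e i
    rw [show (1 ≤ G.degree v) = (0 < G.degree v) from rfl, G.degree_pos_iff_exists_adj]
    haveI : Nontrivial (Fin n) :=
      ⟨⟨⟨0, by omega⟩, ⟨1, by omega⟩, by simp [Fin.ext_iff]⟩⟩
    obtain ⟨w, hw⟩ := exists_ne v
    obtain ⟨p⟩ := hT.isConnected.preconnected v w
    cases p with
    | nil => exact absurd rfl hw.symm
    | cons h _ => exact ⟨_, h⟩
  -- number of vertices of d-degree ≥ 2 is s
  have hcard2 : ((univ : Finset (Fin n)).filter fun i => 2 ≤ d i).card = s := by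
    rw [hs]
    apply Finset.card_bij (fun i _ => e i)
    · intro i hi
      simp only [mem_filter, mem_univ, true_and] at hi ⊢
      rwa [← he i]
    · intro i _ j _ hij
      exact e.injective hij
    · intro v hv
      simp only [mem_filter, mem_univ, true_and] at hv ⊢
      exact ⟨e.symm v, by rw [he, Equiv.apply_symm_apply]; exact hv, by simp⟩
  -- characterize the first s indices
  have hiff : ∀ i : Fin n, (i : ℕ) < s ↔ 2 ≤ d i := by
    intro i
    constructor
    · intro hi
      by_contra hdi
      push_neg at hdi
      have hsub : ((univ : Finset (Fin n)).filter fun j => 2 ≤ d j) ⊆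
          (univ : Finset (Fin n)).filter fun j : Fin n => (j : ℕ) < (i : ℕ) := by
        intro j hj
        simp only [mem_filter, mem_univ, true_and] at hj ⊢
        by_contra hji
        push_neg at hji
        have : d j ≤ d i := hdmono (by exact_mod_cast hji)
        omega
      have := Finset.card_le_card hsub
      rw [hcard2, aux_card_filter_lt n i (le_of_lt i.isLt)] at this
      omega
    · intro hdi
      by_contra hi
      push_neg at hi
      have hsub : ((univ : Finset (Fin n)).filter fun j : Fin n => (j : ℕ) < (i : ℕ) + 1) ⊆
          (univ : Finset (Fin n)).filter fun j => 2 ≤ d j := by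
        intro j hj
        simp only [mem_filter, mem_univ, true_and] at hj ⊢
        have : d i ≤ d j := hdmono (by exact_mod_cast Nat.lt_succ_iff.mp hj)
        omega
      have := Finset.card_le_card hsub
      rw [hcard2, aux_card_filter_lt n ((i : ℕ) + 1) i.isLt] at this
      omega
  have hScard : S.card = s := aux_card_filter_lt n s hsn
  -- sum of the top s degrees
  have hdS : ∑ i ∈ S, d i = n + s - 2 := by
    have hsplit := Finset.sum_add_sum_compl S d
    have hcomp : ∑ i ∈ Sᶜ, d i = n - s := by
      have h1 : ∀ i ∈ Sᶜ, d i = 1 := by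
        intro i hi
        simp only [Finset.mem_compl, hS, Finset.mem_filter, Finset.mem_univ, true_and,
          not_lt] at hi
        have h2 := (hiff i).2
        have h3 := hd1 i
        rcases Nat.lt_or_ge (d i) 2 with h | h
        · omega
        · exact absurd (h2 h) (by omega)
      rw [Finset.sum_congr rfl h1, Finset.sum_const, smul_eq_mul, mul_one,
        Finset.card_compl, hScard, Fintype.card_fin]
    rw [hcomp, hdsum] at hsplit
    omega
  have hdSR : ∑ i ∈ S, (d i : ℝ) = (n : ℝ) + s - 2 := by
    rw [← Nat.cast_sum, hdS, Nat.cast_sub (by omega)]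
    push_cast
    ring
  -- the key absolute-value inequality
  have hzero : ∑ i, (μ i - dbar) = 0 := by
    rw [Finset.sum_sub_distrib, htr, Finset.sum_const, card_univ, Fintype.card_fin,
      nsmul_eq_mul, hdbar]
    field_simp
    ring
  have habs : ∑ i, |μ i - dbar| ≥ 2 * (∑ i ∈ S, μ i - s * dbar) := by
    have hsplit := Finset.sum_add_sum_compl S (fun i => |μ i - dbar|)
    have hsplit2 := Finset.sum_add_sum_compl S (fun i => μ i - dbar)
    have h1 : ∑ i ∈ S, (μ i - dbar) ≤ ∑ i ∈ S, |μ i - dbar| :=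
      Finset.sum_le_sum fun i _ => le_abs_self _
    have h2 : -(∑ i ∈ Sᶜ, (μ i - dbar)) ≤ ∑ i ∈ Sᶜ, |μ i - dbar| := by
      rw [← Finset.sum_neg_distrib]
      exact Finset.sum_le_sum fun i _ => neg_le_abs _
    have h3 : ∑ i ∈ S, (μ i - dbar) = ∑ i ∈ S, μ i - s * dbar := by
      rw [Finset.sum_sub_distrib, Finset.sum_const, hScard, nsmul_eq_mul]
    linarith [hzero, hsplit, hsplit2, h1, h2, h3]
  have part1 : ∑ i, |μ i - dbar| ≥ 2 * n + 2 * s - 2 - 2 * s * dbar := by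
    have hG2 := hGrone
    rw [hdSR] at hG2
    have : ∑ i ∈ S, μ i - (s : ℝ) * dbar ≥ 1 + ((n : ℝ) + s - 2) - s * dbar := by linarith
    calc ∑ i, |μ i - dbar| ≥ 2 * (∑ i ∈ S, μ i - s * dbar) := habs
    _ ≥ 2 * (1 + ((n : ℝ) + s - 2) - s * dbar) := by linarith
    _ = 2 * n + 2 * s - 2 - 2 * s * dbar := by ring
  refine ⟨part1, fun hyp => ?_⟩
  have hπ := Real.pi_pos
  have e1 : 2 * (s : ℝ) * dbar = 4 * s - 4 * s / n := by
    rw [hdbar]; field_simp; ring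
  have e2 : ((Real.pi - 2) / Real.pi) * n = n - 2 * n / Real.pi := by
    field_simp
  rw [e2] at hyp
  calc ∑ i, |μ i - dbar| ≥ 2 * n + 2 * s - 2 - 2 * s * dbar := part1
  _ = 2 * n + 2 * s - 2 - (4 * s - 4 * s / n) := by rw [e1]
  _ ≥ 2 + 4 * n / Real.pi := by
      have key : 2 * (n : ℝ) + 2 * s - 2 - (4 * s - 4 * s / n) - (2 + 4 * n / Real.pi) =
          2 * (((n : ℝ) - 2 * n / Real.pi) - ((s : ℝ) + 2 - 2 * s / n)) := by ring
      linarith [key, hyp]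
end

section
/- Fix integers a, b ≥ 1 and let n = 2(a+b) + 1. Define E = √5·(a+b−1) + √((a+b)² − 2(a+b) + 5) + 4(a+b)/n. Then for n ≥ 19, E > 2 + 4n/π. -/
open Real

theorem energy_T4_gt_path (a b : ℕ) (ha : 1 ≤ a) (hb : 1 ≤ b) (n : ℕ)
    (hn : n = 2 * (a + b) + 1) (hn19 : 19 ≤ n) :
    Real.sqrt 5 * ((a : ℝ) + b - 1) +
        Real.sqrt (((a : ℝ) + b) ^ 2 - 2 * ((a : ℝ) + b) + 5) + 4 * ((a : ℝ) + b) / n >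
      2 + 4 * n / Real.pi := by
  set s : ℝ := (a : ℝ) + b with hsdef
  have hab : 9 ≤ a + b := by omega
  have hs : (9 : ℝ) ≤ s := by
    have : ((9 : ℕ) : ℝ) ≤ ((a + b : ℕ) : ℝ) := Nat.cast_le.mpr hab
    push_cast at this; linarith
  have hn' : (n : ℝ) = 2 * s + 1 := by
    subst hn; push_cast; ring
  have h5 : Real.sqrt 5 ≥ 2.236 := by
    nlinarith [Real.sq_sqrt (by norm_num : (0:ℝ) ≤ 5), Real.sqrt_nonneg 5]
  have hy : (0:ℝ) ≤ s ^ 2 - 2 * s + 5 := by nlinarith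
  have hsq : Real.sqrt (s ^ 2 - 2 * s + 5) ≥ s - 1 := by
    nlinarith [Real.sq_sqrt hy, Real.sqrt_nonneg (s ^ 2 - 2 * s + 5)]
  have hfrac : 4 * s / (n : ℝ) ≥ 36 / 19 := by
    rw [hn', ge_iff_le, div_le_div_iff₀ (by norm_num) (by linarith)]
    nlinarith
  have hpi : Real.pi > 3.141592 := Real.pi_gt_d6
  have hpipos : (0:ℝ) < Real.pi := Real.pi_pos
  have hrhs : 4 * (n : ℝ) / Real.pi < (8 * s + 4) / 3.141592 := by
    rw [div_lt_div_iff₀ hpipos (by norm_num), hn']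
    nlinarith
  have hlhs : Real.sqrt 5 * (s - 1) ≥ 2.236 * (s - 1) := by
    nlinarith
  norm_num at hlhs hrhs
  linarith [hlhs, hsq, hfrac, hrhs]
end

section
/- Let G be a finite simple graph with p pendent vertices (vertices of degree 1) and q quasi-pendent vertices (vertices adjacent to at least one pendent vertex). Then 1 is a Laplacian eigenvalue of G with multiplicity at least p − q. -/
open Finset Polynomial Matrix


lemma my_charpoly_conj {n : Type*} [Fintype n] [DecidableEq n] {R : Type*} [CommRing R]
    (U V M : Matrix n n R) (h1 : U * V = 1) (h2 : V * U = 1) :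
    (U * M * V).charpoly = M.charpoly := by
  have hc : ∀ A : Matrix n n R[X], Matrix.scalar n (X : R[X]) * A = A * Matrix.scalar n X :=
    fun A => (Matrix.scalar_commute (X : R[X]) (fun r' => Commute.all _ _) A).eq
  have hmul : (C : R →+* R[X]).mapMatrix U * (C : R →+* R[X]).mapMatrix V = 1 := by
    rw [← _root_.map_mul, h1, _root_.map_one]
  have hmul2 : (C : R →+* R[X]).mapMatrix V * (C : R →+* R[X]).mapMatrix U = 1 := by
    rw [← _root_.map_mul, h2, _root_.map_one]
  have key : charmatrix (U * M * V)
      = (C : R →+* R[X]).mapMatrix U * charmatrix M * (C : R →+* R[X]).mapMatrix V := by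
    simp only [charmatrix, mul_sub, sub_mul, _root_.map_mul]
    congr 1
    rw [← hc, mul_assoc, hmul, mul_one]
  rw [Matrix.charpoly, Matrix.charpoly, key, det_mul, det_mul, mul_comm, ← mul_assoc, ← det_mul,
    hmul2, det_one, one_mul]

lemma my_charpoly_diagonal {n : Type*} [Fintype n] [DecidableEq n] {R : Type*} [CommRing R]
    (d : n → R) : (Matrix.diagonal d).charpoly = ∏ i, (X - C (d i)) := by
  have h : charmatrix (Matrix.diagonal d) = Matrix.diagonal (fun i => (X : R[X]) - C (d i)) := by
    ext i j
    by_cases hij : i = j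
    · subst hij; simp
    · rw [charmatrix_apply_ne _ _ _ hij, Matrix.diagonal_apply_ne _ hij,
        Matrix.diagonal_apply_ne _ hij, map_zero, neg_zero]
  rw [Matrix.charpoly, h, Matrix.det_diagonal]

lemma my_rootMult {n : Type*} [Fintype n] [DecidableEq n] {R : Type*} [CommRing R] [IsDomain R]
    [DecidableEq R] (d : n → R) (a : R) :
    (∏ i, (X - C (d i))).rootMultiplicity a = (Finset.univ.filter (fun i => d i = a)).card := by
  rw [← Polynomial.count_roots]
  have : (∏ i, (X - C (d i))) = ((Finset.univ.val.map d).map (fun b => X - C b)).prod := by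
    rw [Multiset.map_map]; rfl
  rw [this, Polynomial.roots_multiset_prod_X_sub_C, Multiset.count_map]
  show _ = (Multiset.filter (fun i => d i = a) Finset.univ.val).card
  congr 1
  apply Multiset.filter_congr
  intro x _
  simp [eq_comm]

lemma my_main_bound (n : ℕ) (A : Matrix (Fin n) (Fin n) ℝ) (hA : A.IsHermitian) :
    Module.finrank ℝ ↥(LinearMap.ker (A - 1).mulVecLin) ≤ A.charpoly.rootMultiplicity 1 := by
  set U : Matrix (Fin n) (Fin n) ℝ := (hA.eigenvectorUnitary : Matrix (Fin n) (Fin n) ℝ) with hUdef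
  have hU1 : U * star U = 1 := Matrix.mem_unitaryGroup_iff.mp hA.eigenvectorUnitary.2
  have hU2 : star U * U = 1 := Matrix.mem_unitaryGroup_iff'.mp hA.eigenvectorUnitary.2
  have hspec : A = U * Matrix.diagonal hA.eigenvalues * star U := by
    have h := hA.spectral_theorem
    simpa using h
  have hchar : A.charpoly.rootMultiplicity 1
      = (Finset.univ.filter (fun i => hA.eigenvalues i = 1)).card := by
    conv_lhs => rw [hspec]
    rw [my_charpoly_conj _ _ _ hU1 hU2, my_charpoly_diagonal, my_rootMult]
  have hBeq : A - 1 = U * Matrix.diagonal (fun i => hA.eigenvalues i - 1) * star U := by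
    have hd : (Matrix.diagonal (fun i => hA.eigenvalues i - 1) : Matrix (Fin n) (Fin n) ℝ)
        = Matrix.diagonal hA.eigenvalues - 1 := by
      rw [← Matrix.diagonal_one, Matrix.diagonal_sub]
    rw [hd, mul_sub, sub_mul, mul_one, hU1, ← hspec]
  have hdet : IsUnit U.det := by
    apply IsUnit.of_mul_eq_one (star U).det
    rw [← Matrix.det_mul, hU1, Matrix.det_one]
  have hdet' : IsUnit (star U).det := by
    apply IsUnit.of_mul_eq_one U.det
    rw [← Matrix.det_mul, hU2, Matrix.det_one]
  have hrank : (A - 1).rank = Fintype.card {i // hA.eigenvalues i - 1 ≠ 0} := by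
    rw [hBeq, Matrix.rank_mul_eq_left_of_isUnit_det _ _ hdet',
      Matrix.rank_mul_eq_right_of_isUnit_det _ _ hdet, Matrix.rank_diagonal]
  have hcard : Fintype.card {i // hA.eigenvalues i - 1 ≠ 0}
      + (Finset.univ.filter (fun i => hA.eigenvalues i = 1)).card = n := by
    rw [Fintype.card_subtype]
    have : ∀ i : Fin n, (hA.eigenvalues i - 1 ≠ 0) ↔ ¬(hA.eigenvalues i = 1) := by
      intro i; exact sub_ne_zero
    rw [Finset.filter_congr (fun i _ => by rw [this i])]
    have := Finset.card_filter_add_card_filter_not (s := Finset.univ)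
      (p := fun i : Fin n => hA.eigenvalues i = 1)
    simp only [Finset.card_univ, Fintype.card_fin] at this ⊢
    omega
  have hrn := LinearMap.finrank_range_add_finrank_ker (A - 1).mulVecLin
  have hfr : Module.finrank ℝ (Fin n → ℝ) = n := by
    simp [Module.finrank_pi]
  rw [hfr] at hrn
  have hrdef : (A - 1).rank = Module.finrank ℝ ↥(LinearMap.range (A - 1).mulVecLin) := rfl
  omega


lemma my_pendant_vec (n : ℕ) (G : SimpleGraph (Fin n)) [DecidableRel G.Adj]
    {u u' w : Fin n} (hu : G.degree u = 1) (hu' : G.degree u' = 1)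
    (hw : G.neighborFinset u = {w}) (hw' : G.neighborFinset u' = {w}) :
    G.lapMatrix ℝ *ᵥ (Pi.single u 1 - Pi.single u' 1) = Pi.single u 1 - Pi.single u' 1 := by
  funext v
  rw [SimpleGraph.lapMatrix_mulVec_apply]
  have h1 : u ∈ G.neighborFinset v ↔ v = w := by
    rw [SimpleGraph.mem_neighborFinset, SimpleGraph.adj_comm, ← SimpleGraph.mem_neighborFinset,
      hw, Finset.mem_singleton]
  have h2 : u' ∈ G.neighborFinset v ↔ v = w := by
    rw [SimpleGraph.mem_neighborFinset, SimpleGraph.adj_comm, ← SimpleGraph.mem_neighborFinset,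
      hw', Finset.mem_singleton]
  have hsum : ∑ t ∈ G.neighborFinset v, ((Pi.single u 1 - Pi.single u' 1 : Fin n → ℝ)) t = 0 := by
    simp only [Pi.sub_apply, Finset.sum_sub_distrib, Finset.sum_pi_single']
    rw [if_congr h1 rfl rfl, if_congr h2 rfl rfl, sub_self]
  rw [hsum, sub_zero]
  rcases eq_or_ne v u with rfl | hvu
  · rcases eq_or_ne v u' with rfl | hvu'
    · simp
    · simp [Pi.single_apply, hvu'.symm, hu]
  · rcases eq_or_ne v u' with rfl | hvu'
    · simp [Pi.single_apply, hvu.symm, hu']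
    · simp [Pi.single_apply, hvu.symm, hvu'.symm]
theorem laplacian_eigenvalue_one_multiplicity (n : ℕ)
    (G : SimpleGraph (Fin n)) [DecidableRel G.Adj]
    (p q : ℕ)
    (hp : p = (Finset.univ.filter fun v : Fin n => G.degree v = 1).card)
    (hq : q = (Finset.univ.filter fun v : Fin n =>
        ∃ u, G.Adj v u ∧ G.degree u = 1).card) :
    p - q ≤ (G.lapMatrix ℝ).charpoly.rootMultiplicity 1 := by
  classical
  set P := Finset.univ.filter (fun v : Fin n => G.degree v = 1) with hP
  have hex : ∀ u, u ∈ P → ∃ w, G.neighborFinset u = {w} := by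
    intro u hu
    have hc : (G.neighborFinset u).card = 1 := by
      rw [G.card_neighborFinset_eq_degree]; exact (Finset.mem_filter.mp hu).2
    exact Finset.card_eq_one.mp hc
  choose! N hN using hex
  have hadj : ∀ u, u ∈ P → G.Adj u (N u) := by
    intro u hu
    rw [← SimpleGraph.mem_neighborFinset, hN u hu]
    exact Finset.mem_singleton_self _
  set Q' := P.image N with hQ'
  have hex2 : ∀ w, w ∈ Q' → ∃ u, u ∈ P ∧ N u = w := by
    intro w hw; exact Finset.mem_image.mp hw
  choose! r hrP hrN using hex2
  set S := P.filter (fun u => r (N u) ≠ u) with hS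
  -- cardinality bound : p ≤ S.card + q
  have hT : (P.filter (fun u => r (N u) = u)).card ≤ q := by
    rw [hq]
    apply Finset.card_le_card_of_injOn N
    · intro u hu
      have huP : u ∈ P := (Finset.mem_filter.mp hu).1
      simp only [Finset.mem_coe, Finset.mem_filter, Finset.mem_univ, true_and]
      exact ⟨u, (hadj u huP).symm, (Finset.mem_filter.mp huP).2⟩
    · intro a ha b hb hab
      rw [← (Finset.mem_filter.mp ha).2, ← (Finset.mem_filter.mp hb).2, hab]
  have hPsplit : (P.filter (fun u => r (N u) = u)).card + S.card = p := by
    rw [hp, hS]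
    exact Finset.card_filter_add_card_filter_not (p := fun u => r (N u) = u)
  -- eigenvectors
  have hherm : (G.lapMatrix ℝ).IsHermitian := (G.posSemidef_lapMatrix ℝ).1
  set K := LinearMap.ker (G.lapMatrix ℝ - 1).mulVecLin with hK
  have hmem : ∀ u, u ∈ S → (Pi.single u 1 - Pi.single (r (N u)) 1 : Fin n → ℝ) ∈ K := by
    intro u huS
    have huP : u ∈ P := (Finset.mem_filter.mp huS).1
    have hNu : N u ∈ Q' := Finset.mem_image_of_mem N huP
    have hvec := my_pendant_vec n G (Finset.mem_filter.mp huP).2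
      (Finset.mem_filter.mp (hrP _ hNu)).2 (hN u huP)
      (by rw [hN _ (hrP _ hNu), hrN _ hNu])
    rw [hK, LinearMap.mem_ker, Matrix.mulVecLin_apply, Matrix.sub_mulVec, hvec,
      Matrix.one_mulVec, sub_self]
  set f : S → (Fin n → ℝ) := fun u => Pi.single (u : Fin n) 1 - Pi.single (r (N (u : Fin n))) 1
    with hf
  have hnotr : ∀ u₀ : Fin n, u₀ ∈ S → ∀ u : Fin n, u ∈ S → r (N u) ≠ u₀ := by
    intro u₀ h₀ u hu hcon
    have hNu : N u ∈ Q' := Finset.mem_image_of_mem N (Finset.mem_filter.mp hu).1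
    have hNN : N u₀ = N u := by rw [← hcon, hrN _ hNu]
    exact (Finset.mem_filter.mp h₀).2 (by rw [hNN, hcon])
  have hli : LinearIndependent ℝ f := by
    rw [Fintype.linearIndependent_iff]
    intro g hg i₀
    have h0 := congrFun hg (i₀ : Fin n)
    rw [Finset.sum_apply, Pi.zero_apply] at h0
    rw [Finset.sum_eq_single i₀ ?hne (by simp)] at h0
    · have : (f i₀) (i₀ : Fin n) = 1 := by
        simp only [hf, Pi.sub_apply, Pi.single_eq_same,
          Pi.single_apply]
        rw [if_neg (fun h => (hnotr i₀ i₀.2 i₀ i₀.2) h.symm), sub_zero]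
      rw [Pi.smul_apply, this, smul_eq_mul, mul_one] at h0
      exact h0
    case hne =>
      intro i _ hii
      have h1 : (i₀ : Fin n) ≠ (i : Fin n) := fun h => hii (Subtype.ext h.symm)
      have h2 : (i₀ : Fin n) ≠ r (N (i : Fin n)) := fun h =>
        (hnotr i₀ i₀.2 i i.2) h.symm
      simp [hf, Pi.single_apply, h1, h2]
  have hcardS : S.card ≤ Module.finrank ℝ K := by
    have hKi : LinearIndependent ℝ (fun u : S => (⟨f u, hmem u u.2⟩ : K)) := by
      apply LinearIndependent.of_comp K.subtype
      exact hli
    have := hKi.fintype_card_le_finrank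
    simpa [Fintype.card_coe] using this
  have hmb := my_main_bound n (G.lapMatrix ℝ) hherm
  rw [← hK] at hmb
  omega
end

section
/- Let T be a tree of order n ≥ 8, let e be an edge of T whose deletion yields components T₁ and T₂, and let σ be the number of Laplacian eigenvalues of the disjoint union T₁ ∪ T₂ that are ≥ 2 − 4/n. If k₁ and k₂ denote the number of Laplacian eigenvalues of T₁ and T₂ respectively that are ≥ 2 − 4/n (so k₁ + k₂ = σ), then LE(T) ≥ 2·S_{k₁}(T₁) + 2·S_{k₂}(T₂) − 4σ + 4σ/n, where S_k(G) denotes the sum of the k largest Laplacian eigenvalues of G. -/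
open Finset Polynomial Matrix

lemma exists_eq_comp_perm {α : Type*} : ∀ {n : ℕ} (a b : Fin n → α),
    Multiset.map a Finset.univ.val = Multiset.map b Finset.univ.val →
    ∃ e : Equiv.Perm (Fin n), a = b ∘ e := by
  intro n
  induction n with
  | zero => exact fun a b _ => ⟨Equiv.refl _, funext fun i => i.elim0⟩
  | succ n ih =>
    intro a b h
    have ha0 : a 0 ∈ Multiset.map b Finset.univ.val := by
      rw [← h]
      exact Multiset.mem_map_of_mem a (Finset.mem_univ_val 0)
    obtain ⟨j, -, hj⟩ := Multiset.mem_map.mp ha0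
    set b' : Fin (n + 1) → α := b ∘ (Equiv.swap 0 j) with hb'def
    have hmapswap : Finset.univ.val.map ⇑(Equiv.swap 0 j) = Finset.univ.val := by
      have := congrArg Finset.val (Finset.map_univ_equiv (Equiv.swap 0 j))
      simpa [Finset.map_val] using this
    have hb' : Multiset.map b' Finset.univ.val = Multiset.map b Finset.univ.val := by
      rw [hb'def, ← Multiset.map_map, hmapswap]
    have hdec : ∀ c : Fin (n + 1) → α, Multiset.map c (Finset.univ : Finset (Fin (n+1))).val
        = c 0 ::ₘ Multiset.map (c ∘ Fin.succ) Finset.univ.val := by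
      intro c
      rw [Fin.univ_succ]
      simp only [Finset.cons_val, Finset.map_val, Multiset.map_cons, Multiset.map_map]
      rfl
    have hb'0 : b' 0 = a 0 := by
      simp [hb'def, hj]
    have htail : Multiset.map (a ∘ Fin.succ) Finset.univ.val
        = Multiset.map (b' ∘ Fin.succ) Finset.univ.val := by
      have := h.trans hb'.symm
      rw [hdec a, hdec b', hb'0] at this
      exact (Multiset.cons_inj_right _).mp this
    obtain ⟨e', he'⟩ := ih (a ∘ Fin.succ) (b' ∘ Fin.succ) htail
    refine ⟨(Equiv.Perm.decomposeFin.symm (0, e')).trans (Equiv.swap 0 j), funext fun i => ?_⟩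
    refine Fin.cases ?_ (fun i => ?_) i
    · simpa [hj] using hb'0.symm.trans (by simp [hb'def])
    · have := congrFun he' i
      simp only [Function.comp_apply] at this ⊢
      rw [this]
      simp [hb'def, Equiv.Perm.decomposeFin_symm_apply_succ, Equiv.swap_self]

lemma multiset_eq_of_prod_X_sub_C {n : ℕ} (a b : Fin n → ℝ)
    (h : ∏ i, (X - C (a i)) = ∏ i, (X - C (b i))) :
    Multiset.map a Finset.univ.val = Multiset.map b Finset.univ.val := by
  have key : ∀ c : Fin n → ℝ, (∏ i, (X - C (c i))).roots = Multiset.map c Finset.univ.val := by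
    intro c
    have := roots_multiset_prod_X_sub_C (Multiset.map c Finset.univ.val)
    rwa [Multiset.map_map, ← Finset.prod_eq_multiset_prod] at this
  rw [← key a, ← key b, h]

lemma charpoly_conj_unit {m : ℕ} (U D V : Matrix (Fin m) (Fin m) ℝ) (hUV : U * V = 1) :
    (U * D * V).charpoly = D.charpoly := by
  have hmap : ∀ M N : Matrix (Fin m) (Fin m) ℝ,
      (M * N).map (C : ℝ →+* ℝ[X]) = M.map C * N.map C := fun M N => Matrix.map_mul
  have hC : charmatrix (U * D * V) = U.map (C : ℝ →+* ℝ[X]) * charmatrix D * V.map C := by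
    rw [charmatrix, charmatrix]
    rw [mul_sub, sub_mul]
    congr 1
    · have hcomm := (Matrix.scalar_commute (X : ℝ[X]) (fun r => Commute.all _ _)
        (U.map (C : ℝ →+* ℝ[X]))).eq
      calc Matrix.scalar (Fin m) (X : ℝ[X])
          = Matrix.scalar (Fin m) (X : ℝ[X]) * ((U*V).map (C : ℝ →+* ℝ[X])) := by
            rw [hUV]; simp
        _ = U.map (C : ℝ →+* ℝ[X]) * Matrix.scalar (Fin m) (X : ℝ[X]) * V.map C := by
            rw [hmap, ← mul_assoc, ← hcomm]
    · simp only [RingHom.mapMatrix_apply]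
      rw [hmap, hmap]
  have hdet1 : det (U.map (C : ℝ →+* ℝ[X])) * det (V.map (C : ℝ →+* ℝ[X])) = 1 := by
    rw [← det_mul, ← hmap, hUV]
    simp
  calc (U * D * V).charpoly
      = det (U.map (C : ℝ →+* ℝ[X])) * det (charmatrix D) * det (V.map (C : ℝ →+* ℝ[X])) := by
        rw [Matrix.charpoly, hC, det_mul, det_mul]
    _ = det (U.map (C : ℝ →+* ℝ[X])) * det (V.map (C : ℝ →+* ℝ[X])) * det (charmatrix D) := by
        ring
    _ = D.charpoly := by rw [hdet1, one_mul, Matrix.charpoly]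

lemma charpoly_eq_prod_eigenvalues {m : ℕ} (A : Matrix (Fin m) (Fin m) ℝ) (hA : A.IsHermitian) :
    A.charpoly = ∏ i, (X - C (hA.eigenvalues i)) := by
  have hU : (hA.eigenvectorUnitary : Matrix (Fin m) (Fin m) ℝ)
      * (star hA.eigenvectorUnitary : Matrix (Fin m) (Fin m) ℝ) = 1 := by
    simpa using (Matrix.mem_unitaryGroup_iff.mp hA.eigenvectorUnitary.2)
  have hspec := hA.spectral_theorem
  rw [RCLike.ofReal_real_eq_id] at hspec
  calc A.charpoly
      = (Matrix.diagonal (id ∘ hA.eigenvalues) : Matrix (Fin m) (Fin m) ℝ).charpoly := by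
        conv_lhs => rw [hspec]
        exact charpoly_conj_unit _ _ _ hU
    _ = ∏ i, (X - C (hA.eigenvalues i)) := by
        rw [Matrix.charpoly_of_upperTriangular _ (Matrix.blockTriangular_diagonal _)]
        simp

lemma psd_diag_nonneg {m : ℕ} {M : Matrix (Fin m) (Fin m) ℝ} (hM : M.PosSemidef) (i : Fin m) :
    0 ≤ M i i := by
  exact hM.diag_nonneg

lemma key_trace_ineq {m : ℕ} (A B : Matrix (Fin m) (Fin m) ℝ)
    (hA : A.IsHermitian) (hB : B.IsHermitian) (hAB : (A - B).PosSemidef)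
    (S : Finset (Fin m)) :
    ∃ t : Fin m → ℝ, (∀ i, 0 ≤ t i) ∧ (∀ i, t i ≤ 1) ∧ (∑ i, t i = S.card) ∧
      ∑ i ∈ S, hB.eigenvalues i ≤ ∑ i, hA.eigenvalues i * t i := by
  set U : Matrix (Fin m) (Fin m) ℝ := (hA.eigenvectorUnitary : Matrix (Fin m) (Fin m) ℝ) with hUdef
  set W : Matrix (Fin m) (Fin m) ℝ := (hB.eigenvectorUnitary : Matrix (Fin m) (Fin m) ℝ) with hWdef
  have hUU : star U * U = 1 := Matrix.mem_unitaryGroup_iff'.mp hA.eigenvectorUnitary.2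
  have hUU' : U * star U = 1 := Matrix.mem_unitaryGroup_iff.mp hA.eigenvectorUnitary.2
  have hWW : star W * W = 1 := Matrix.mem_unitaryGroup_iff'.mp hB.eigenvectorUnitary.2
  have hWW' : W * star W = 1 := Matrix.mem_unitaryGroup_iff.mp hB.eigenvectorUnitary.2
  set α := hA.eigenvalues with hαdef
  set β := hB.eigenvalues with hβdef
  have hAspec : A = U * Matrix.diagonal α * star U := by
    have := hA.spectral_theorem
    rwa [RCLike.ofReal_real_eq_id, Function.id_comp] at this
  have hBspec : B = W * Matrix.diagonal β * star W := by
    have := hB.spectral_theorem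
    rwa [RCLike.ofReal_real_eq_id, Function.id_comp] at this
  set E : Matrix (Fin m) (Fin m) ℝ :=
    Matrix.diagonal (fun i => if i ∈ S then (1:ℝ) else 0) with hEdef
  have hEE : E * E = E := by
    rw [hEdef, Matrix.diagonal_mul_diagonal]
    refine congrArg Matrix.diagonal (funext fun i => ?_)
    by_cases h : i ∈ S <;> simp [h]
  have hEstar : star E = E := by
    rw [hEdef, Matrix.star_eq_conjTranspose, Matrix.diagonal_conjTranspose]
    refine congrArg Matrix.diagonal (funext fun i => ?_)
    by_cases h : i ∈ S <;> simp [h]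
  set P : Matrix (Fin m) (Fin m) ℝ := W * E * star W with hPdef
  -- P is PSD
  have hP : P.PosSemidef := by
    have hE : (Matrix.diagonal (fun i => if i ∈ S then (1:ℝ) else 0)).PosSemidef :=
      Matrix.PosSemidef.diagonal (fun i => by by_cases h : i ∈ S <;> simp [h])
    have := hE.mul_mul_conjTranspose_same W
    rwa [← Matrix.star_eq_conjTranspose, ← hEdef, ← hPdef] at this
  have hQ : ((1 : Matrix (Fin m) (Fin m) ℝ) - P).PosSemidef := by
    have h1E : (1 : Matrix (Fin m) (Fin m) ℝ) - E =
        Matrix.diagonal (fun i => if i ∈ S then (0:ℝ) else 1) := by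
      rw [hEdef, ← Matrix.diagonal_one, Matrix.diagonal_sub]
      refine congrArg Matrix.diagonal (funext fun i => ?_)
      by_cases h : i ∈ S <;> simp [h]
    have hE' : ((1 : Matrix (Fin m) (Fin m) ℝ) - E).PosSemidef := by
      rw [h1E]
      exact Matrix.PosSemidef.diagonal (fun i => by by_cases h : i ∈ S <;> simp [h])
    have := hE'.mul_mul_conjTranspose_same W
    rwa [Matrix.mul_sub, Matrix.sub_mul, Matrix.mul_one, ← Matrix.star_eq_conjTranspose,
      hWW', ← hPdef] at this
  set t : Fin m → ℝ := fun i => (star U * P * U) i i with htdef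
  have hUPU : (star U * P * U).PosSemidef := by
    have := hP.conjTranspose_mul_mul_same U
    rwa [← Matrix.star_eq_conjTranspose] at this
  have ht0 : ∀ i, 0 ≤ t i := fun i => psd_diag_nonneg hUPU i
  have ht1 : ∀ i, t i ≤ 1 := by
    intro i
    have hsub : star U * ((1 : Matrix (Fin m) (Fin m) ℝ) - P) * U
        = 1 - star U * P * U := by
      rw [Matrix.mul_sub, Matrix.sub_mul, Matrix.mul_one, hUU]
    have hpsd : (1 - star U * P * U).PosSemidef := by
      rw [← hsub]
      have := hQ.conjTranspose_mul_mul_same U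
      rwa [← Matrix.star_eq_conjTranspose] at this
    have := psd_diag_nonneg hpsd i
    have h1 : (1 : Matrix (Fin m) (Fin m) ℝ) i i = 1 := Matrix.one_apply_eq i
    simp only [Matrix.sub_apply, h1] at this
    linarith [this]
  have htsum : ∑ i, t i = S.card := by
    have h1 : ∑ i, t i = Matrix.trace (star U * P * U) := by
      rw [Matrix.trace]; rfl
    rw [h1, Matrix.trace_mul_cycle, ← Matrix.mul_assoc, hUU', Matrix.one_mul,
      Matrix.trace_mul_cycle, hWW, Matrix.one_mul, Matrix.trace_diagonal]
    simp
  -- trace identities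
  have htraceAP : Matrix.trace (A * P) = ∑ i, α i * t i := by
    have : A * P = U * (Matrix.diagonal α * (star U * P * U)) * star U := by
      rw [hAspec]
      simp only [Matrix.mul_assoc, ← hUU']
      rw [hUU']
      simp only [Matrix.mul_one, Matrix.one_mul]
    rw [this, Matrix.trace_mul_cycle, ← Matrix.mul_assoc, hUU, Matrix.one_mul]
    rw [Matrix.trace]
    congr 1
    funext i
    rw [Matrix.diag_apply, Matrix.diagonal_mul]
  have htraceBP : Matrix.trace (B * P) = ∑ i ∈ S, β i := by
    have : B * P = W * (Matrix.diagonal β * E) * star W := by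
      rw [hBspec, hPdef]
      calc W * Matrix.diagonal β * star W * (W * E * star W)
          = W * Matrix.diagonal β * (star W * W) * E * star W := by
            simp only [Matrix.mul_assoc]
        _ = W * (Matrix.diagonal β * E) * star W := by
            rw [hWW]; simp only [Matrix.mul_one, Matrix.mul_assoc, Matrix.one_mul]
    rw [this, Matrix.trace_mul_cycle, hWW, Matrix.one_mul,
      Matrix.diagonal_mul_diagonal, Matrix.trace_diagonal]
    simp [mul_ite, mul_one, mul_zero, Finset.sum_ite_mem]
  -- trace((A-B)P) ≥ 0
  have htracediff : 0 ≤ Matrix.trace ((A - B) * P) := by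
    have hPNN : P = (W * E) * star (W * E) := by
      rw [StarMul.star_mul, hEstar, hPdef]
      calc W * E * star W = W * (E * E) * star W := by rw [hEE]
        _ = W * E * (E * star W) := by simp only [Matrix.mul_assoc]
    have hpsd : (star (W * E) * (A - B) * (W * E)).PosSemidef := by
      have := hAB.conjTranspose_mul_mul_same (W * E)
      rwa [← Matrix.star_eq_conjTranspose] at this
    have : 0 ≤ Matrix.trace (star (W * E) * (A - B) * (W * E)) := by
      rw [Matrix.trace]
      exact Finset.sum_nonneg fun i _ => psd_diag_nonneg hpsd i
    rwa [Matrix.trace_mul_cycle, Matrix.trace_mul_comm, ← hPNN] at this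
  refine ⟨t, ht0, ht1, htsum, ?_⟩
  rw [← htraceBP, ← htraceAP]
  have := htracediff
  rw [Matrix.sub_mul, Matrix.trace_sub] at this
  linarith

lemma lapMatrix_sub_posSemidef {n : ℕ} (G H : SimpleGraph (Fin n))
    [DecidableRel G.Adj] [DecidableRel H.Adj] (h : ∀ i j, H.Adj i j → G.Adj i j) :
    (G.lapMatrix ℝ - H.lapMatrix ℝ).PosSemidef := by
  refine Matrix.PosSemidef.of_dotProduct_mulVec_nonneg ?_ ?_
  · exact ((SimpleGraph.posSemidef_lapMatrix ℝ G).1).sub ((SimpleGraph.posSemidef_lapMatrix ℝ H).1)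
  · intro x
    rw [star_trivial, Matrix.sub_mulVec, dotProduct_sub,
      ← Matrix.toLinearMap₂'_apply', ← Matrix.toLinearMap₂'_apply',
      SimpleGraph.lapMatrix_toLinearMap₂', SimpleGraph.lapMatrix_toLinearMap₂']
    rw [sub_nonneg]
    gcongr with i _ j _
    by_cases hH : H.Adj i j
    · rw [if_pos hH, if_pos (h i j hH)]
    · rw [if_neg hH]
      positivity

lemma lapMatrix_trace {n : ℕ} (G : SimpleGraph (Fin n)) [DecidableRel G.Adj] :
    (G.lapMatrix ℝ).trace = ∑ i, (G.degree i : ℝ) := by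
  simp [Matrix.trace, SimpleGraph.lapMatrix, Matrix.diag, SimpleGraph.degMatrix,
    Matrix.sub_apply, Matrix.diagonal_apply_eq]

lemma card_filter_val_lt {m k : ℕ} (hk : k ≤ m) :
    (Finset.univ.filter fun i : Fin m => (i : ℕ) < k).card = k := by
  have himg : (Finset.univ.filter fun i : Fin m => (i : ℕ) < k).image Fin.val
      = Finset.range k := by
    ext j
    simp only [Finset.mem_image, Finset.mem_filter, Finset.mem_univ, true_and, Finset.mem_range]
    constructor
    · rintro ⟨i, hi, rfl⟩; exact hi
    · intro hj; exact ⟨⟨j, lt_of_lt_of_le hj hk⟩, hj, rfl⟩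
  have hc := Finset.card_image_of_injective
    (Finset.univ.filter fun i : Fin m => (i : ℕ) < k) Fin.val_injective
  rw [himg, Finset.card_range] at hc
  exact hc.symm
theorem laplacian_energy_edge_deletion (n n₁ n₂ : ℕ) (hn : 8 ≤ n) (hn₁₂ : n₁ + n₂ = n)
    (G : SimpleGraph (Fin n)) [DecidableRel G.Adj] (hT : G.IsTree)
    (v w : Fin n) (hadj : G.Adj v w)
    (T₁ : SimpleGraph (Fin n₁)) [DecidableRel T₁.Adj] (hT₁ : T₁.Connected)
    (T₂ : SimpleGraph (Fin n₂)) [DecidableRel T₂.Adj] (hT₂ : T₂.Connected)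
    (inst : DecidableRel (G.deleteEdges {s(v, w)}).Adj)
    (hsplit : ((G.deleteEdges {s(v, w)}).lapMatrix ℝ).charpoly =
        (T₁.lapMatrix ℝ).charpoly * (T₂.lapMatrix ℝ).charpoly)
    (μ : Fin n → ℝ) (hμmono : Antitone μ)
    (hμ : (G.lapMatrix ℝ).charpoly = ∏ i, (X - C (μ i)))
    (ν₁ : Fin n₁ → ℝ) (hν₁mono : Antitone ν₁)
    (hν₁ : (T₁.lapMatrix ℝ).charpoly = ∏ i, (X - C (ν₁ i)))
    (ν₂ : Fin n₂ → ℝ) (hν₂mono : Antitone ν₂)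
    (hν₂ : (T₂.lapMatrix ℝ).charpoly = ∏ i, (X - C (ν₂ i)))
    (k₁ k₂ σ : ℕ)
    (hk₁ : k₁ = (Finset.univ.filter fun i : Fin n₁ => 2 - 4 / (n : ℝ) ≤ ν₁ i).card)
    (hk₂ : k₂ = (Finset.univ.filter fun i : Fin n₂ => 2 - 4 / (n : ℝ) ≤ ν₂ i).card)
    (hσ : σ = k₁ + k₂) :
    ∑ i, |μ i - (2 - 2 / (n : ℝ))| ≥
      2 * (∑ i ∈ Finset.univ.filter fun i : Fin n₁ => (i : ℕ) < k₁, ν₁ i) +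
        2 * (∑ i ∈ Finset.univ.filter fun i : Fin n₂ => (i : ℕ) < k₂, ν₂ i) -
        4 * σ + 4 * σ / n := by
  classical
  haveI : Nonempty (Fin n) := ⟨⟨0, by omega⟩⟩
  have hnR : (0:ℝ) < (n:ℝ) := by exact_mod_cast (by omega : 0 < n)
  set d : ℝ := 2 - 2 / (n:ℝ) with hd
  set A := G.lapMatrix ℝ with hAdef
  set B := (G.deleteEdges {s(v, w)}).lapMatrix ℝ with hBdef
  have hAH : A.IsHermitian := (SimpleGraph.posSemidef_lapMatrix ℝ G).1
  have hBH : B.IsHermitian := (SimpleGraph.posSemidef_lapMatrix ℝ (G.deleteEdges {s(v, w)})).1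
  set q : (Fin n₁ ⊕ Fin n₂) ≃ Fin n := finSumFinEquiv.trans (finCongr hn₁₂) with hqdef
  set νc : Fin n → ℝ := fun i => Sum.elim ν₁ ν₂ (q.symm i) with hνc
  have hBchar : B.charpoly = ∏ i, (X - C (νc i)) := by
    rw [hBdef, hsplit, hν₁, hν₂]
    calc (∏ i, (X - C (ν₁ i))) * (∏ i, (X - C (ν₂ i)))
        = ∏ j : Fin n₁ ⊕ Fin n₂, (X - C (Sum.elim ν₁ ν₂ j)) := by
          rw [Fintype.prod_sum_type]
          rfl
      _ = ∏ i : Fin n, (X - C (νc i)) := by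
          rw [← Equiv.prod_comp q fun i : Fin n => (X - C (νc i))]
          exact Finset.prod_congr rfl fun j _ => by simp [hνc]
  have hAchar := charpoly_eq_prod_eigenvalues A hAH
  obtain ⟨eA, heA⟩ := exists_eq_comp_perm hAH.eigenvalues μ
    (multiset_eq_of_prod_X_sub_C _ _ (hAchar.symm.trans hμ))
  have hBchar2 := charpoly_eq_prod_eigenvalues B hBH
  obtain ⟨eB, heB⟩ := exists_eq_comp_perm νc hBH.eigenvalues
    (multiset_eq_of_prod_X_sub_C _ _ (hBchar.symm.trans hBchar2))
  -- index sets
  have hk₁n : k₁ ≤ n₁ := by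
    rw [hk₁]
    exact le_trans (Finset.card_filter_le _ _) (by simp)
  have hk₂n : k₂ ≤ n₂ := by
    rw [hk₂]
    exact le_trans (Finset.card_filter_le _ _) (by simp)
  set S₁ := Finset.univ.filter (fun i : Fin n₁ => (i:ℕ) < k₁) with hS₁def
  set S₂ := Finset.univ.filter (fun i : Fin n₂ => (i:ℕ) < k₂) with hS₂def
  have hS₁card : S₁.card = k₁ := card_filter_val_lt hk₁n
  have hS₂card : S₂.card = k₂ := card_filter_val_lt hk₂n
  set f₁ : Fin n₁ → Fin n := fun i => q (Sum.inl i) with hf₁def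
  set f₂ : Fin n₂ → Fin n := fun i => q (Sum.inr i) with hf₂def
  have hf₁ : Function.Injective f₁ := fun a b hab => Sum.inl_injective (q.injective hab)
  have hf₂ : Function.Injective f₂ := fun a b hab => Sum.inr_injective (q.injective hab)
  set S₀ := S₁.image f₁ ∪ S₂.image f₂ with hS₀def
  have hdisj : Disjoint (S₁.image f₁) (S₂.image f₂) := by
    rw [Finset.disjoint_left]
    rintro x hx₁ hx₂
    obtain ⟨a, -, rfl⟩ := Finset.mem_image.mp hx₁
    obtain ⟨b, -, hb⟩ := Finset.mem_image.mp hx₂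
    exact absurd (q.injective hb) (by simp [hf₁def, hf₂def])
  have hS₀card : S₀.card = σ := by
    rw [hS₀def, Finset.card_union_of_disjoint hdisj, Finset.card_image_of_injective _ hf₁,
      Finset.card_image_of_injective _ hf₂, hS₁card, hS₂card, hσ]
  have hS₀sum : ∑ j ∈ S₀, νc j = (∑ i ∈ S₁, ν₁ i) + ∑ i ∈ S₂, ν₂ i := by
    rw [hS₀def, Finset.sum_union hdisj, Finset.sum_image (fun a _ b _ hab => hf₁ hab),
      Finset.sum_image (fun a _ b _ hab => hf₂ hab)]
    congr 1
    · exact Finset.sum_congr rfl fun i _ => by simp [hνc, hf₁def]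
    · exact Finset.sum_congr rfl fun i _ => by simp [hνc, hf₂def]
  set S := S₀.image eB with hSdef
  have hScard : S.card = σ := by
    rw [hSdef, Finset.card_image_of_injective _ eB.injective, hS₀card]
  have hSsum : ∑ i ∈ S, hBH.eigenvalues i = (∑ i ∈ S₁, ν₁ i) + ∑ i ∈ S₂, ν₂ i := by
    rw [hSdef, Finset.sum_image (fun a _ b _ hab => eB.injective hab), ← hS₀sum]
    exact Finset.sum_congr rfl fun j _ => (congrFun heB j).symm
  -- PSD of difference and key inequality
  have hABpsd : (A - B).PosSemidef :=
    lapMatrix_sub_posSemidef G _ (fun i j hij => (SimpleGraph.deleteEdges_adj.mp hij).1)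
  obtain ⟨t, ht0, ht1, htsum, hineq⟩ := key_trace_ineq A B hAH hBH hABpsd S
  rw [hScard] at htsum
  rw [hSsum] at hineq
  -- trace of A
  have hμsum : ∑ i, μ i = 2 * (n:ℝ) - 2 := by
    have h2 := Matrix.trace_eq_neg_charpoly_coeff A
    have h3 := Polynomial.prod_X_sub_C_coeff_card_pred Finset.univ μ
      (by rw [Finset.card_univ, Fintype.card_fin]; omega)
    rw [Finset.card_univ, Fintype.card_fin] at h3
    rw [hμ, Fintype.card_fin, h3, neg_neg] at h2
    have h4 : A.trace = 2 * (n:ℝ) - 2 := by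
      rw [hAdef, lapMatrix_trace]
      have hE : G.edgeFinset.card + 1 = n := by
        have := hT.card_edgeFinset
        rwa [Fintype.card_fin] at this
      have h5 : ∑ i, G.degree i = 2 * (n - 1) := by
        rw [SimpleGraph.sum_degrees_eq_twice_card_edges]
        omega
      have h6 : ∑ i, (G.degree i : ℝ) = ((∑ i, G.degree i : ℕ) : ℝ) := by push_cast; rfl
      rw [h6, h5]
      have h7 : (1:ℕ) ≤ n := by omega
      rw [Nat.cast_mul, Nat.cast_sub h7]
      push_cast
      ring
    rw [← h2, h4]
  -- rewrite LHS
  have habs : ∀ y : ℝ, |y| = 2 * max y 0 - y := by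
    intro y
    rcases le_total y 0 with h | h
    · rw [abs_of_nonpos h, max_eq_right h]; ring
    · rw [abs_of_nonneg h, max_eq_left h]; ring
  have hnd : (n:ℝ) * d = 2 * (n:ℝ) - 2 := by
    rw [hd]
    field_simp
  have hLHS : ∑ i, |μ i - d| = 2 * ∑ i, max (μ i - d) 0 := by
    have h8 : ∑ i, |μ i - d| = ∑ i, (2 * max (μ i - d) 0 - (μ i - d)) :=
      Finset.sum_congr rfl fun i _ => habs _
    rw [h8, Finset.sum_sub_distrib, ← Finset.mul_sum, Finset.sum_sub_distrib, hμsum,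
      Finset.sum_const, Finset.card_univ, Fintype.card_fin, nsmul_eq_mul, hnd]
    ring
  -- transfer max sums via eA
  have hmaxeq : ∑ i, max (hAH.eigenvalues i - d) 0 = ∑ i, max (μ i - d) 0 := by
    calc ∑ i, max (hAH.eigenvalues i - d) 0 = ∑ i, max (μ (eA i) - d) 0 :=
          Finset.sum_congr rfl fun i _ => by rw [congrFun heA i]; rfl
      _ = ∑ i, max (μ i - d) 0 := Equiv.sum_comp eA (fun i => max (μ i - d) 0)
  -- main bound
  have hbound : ∑ i, hAH.eigenvalues i * t i - d * σ ≤ ∑ i, max (μ i - d) 0 := by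
    rw [← hmaxeq]
    have h9 : ∑ i, (hAH.eigenvalues i - d) * t i
        = ∑ i, hAH.eigenvalues i * t i - d * σ := by
      rw [← htsum, Finset.mul_sum, ← Finset.sum_sub_distrib]
      exact Finset.sum_congr rfl fun i _ => by ring
    rw [← h9]
    apply Finset.sum_le_sum
    intro i _
    calc (hAH.eigenvalues i - d) * t i
        ≤ max (hAH.eigenvalues i - d) 0 * t i :=
          mul_le_mul_of_nonneg_right (le_max_left _ _) (ht0 i)
      _ ≤ max (hAH.eigenvalues i - d) 0 * 1 :=
          mul_le_mul_of_nonneg_left (ht1 i) (le_max_right _ _)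
      _ = max (hAH.eigenvalues i - d) 0 := mul_one _
  rw [ge_iff_le, hLHS]
  have hfin : d * σ = 2 * σ - 2 * σ / n := by
    rw [hd]
    field_simp
  calc 2 * (∑ i ∈ S₁, ν₁ i) + 2 * (∑ i ∈ S₂, ν₂ i) - 4 * (σ:ℝ) + 4 * (σ:ℝ) / (n:ℝ)
      = 2 * ((∑ i ∈ S₁, ν₁ i + ∑ i ∈ S₂, ν₂ i) - d * σ) := by
        rw [hfin]; ring
    _ ≤ 2 * (∑ i, hAH.eigenvalues i * t i - d * σ) := by linarith [hineq]
    _ ≤ 2 * ∑ i, max (μ i - d) 0 := by linarith [hbound]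
end
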